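/- arXiv:2405.11339 — 7 statements merged into one kernel-verified Lean document; each statement's English description precedes it below -/
import Mathlib

section
/- Let α > 0, μ > 0 and let k ≥ 1 be a natural number. Then for every t > 0 the function t ↦ E_{α,1}(−μ t^α) is k times differentiable at t and its k-th derivative equals −μ t^{α−k} E_{α,α−k+1}(−μ t^α). -/
open Real Filter Topology

/-- The real two-parameter Mittag-Leffler function `E_{α,β}(x) = ∑_{j=0}^∞ x^j / Γ(jα + β)`.
`Real.Gamma` vanishes at the nonpositive integers, so the corresponding terms are `0`. -/
noncomputable def mittagLefflerReal (α β : ℝ) (x : ℝ) : ℝ :=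
  ∑' j : ℕ, x ^ j / Real.Gamma ((j : ℝ) * α + β)

lemma inv_gamma_succ (x : ℝ) : x * (Real.Gamma (x+1))⁻¹ = (Real.Gamma x)⁻¹ := by
  rcases eq_or_ne x 0 with h | h
  · simp [h, Real.Gamma_zero]
  · rw [Real.Gamma_add_one h]
    rcases eq_or_ne (Real.Gamma x) 0 with hg | hg
    · simp [hg]
    · field_simp

lemma summable_aux {α : ℝ} (hα : 0 < α) (β x : ℝ) :
    Summable (fun j : ℕ => |x| ^ j * |(Real.Gamma ((j:ℝ)*α+β))⁻¹|) := by
  set α₀ := min α 2⁻¹ with hα₀def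
  have hα₀ : 0 < α₀ := lt_min hα (by norm_num)
  have hα₀1 : α₀ < 1 := lt_of_le_of_lt (min_le_right _ _) (by norm_num)
  have hα₀α : α₀ ≤ α := min_le_left _ _
  have htend : Tendsto (fun j : ℕ => (j:ℝ)*α+β) atTop atTop := by
    apply Filter.tendsto_atTop_add_const_right
    exact Filter.Tendsto.atTop_mul_const hα tendsto_natCast_atTop_atTop
  set C := (2*(|x|+1)) ^ (1/α₀) with hCdef
  have hCnn : 0 ≤ C := Real.rpow_nonneg (by positivity) _
  have hev : ∀ᶠ j : ℕ in atTop, 2 ≤ (j:ℝ)*α+β ∧ C ≤ (j:ℝ)*α+β+α₀-1 := by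
    filter_upwards [htend.eventually_ge_atTop 2, htend.eventually_ge_atTop (C + 1 - α₀)]
      with j h1 h2
    exact ⟨h1, by linarith⟩
  apply summable_of_ratio_norm_eventually_le (r := 2⁻¹) (by norm_num)
  filter_upwards [hev] with j hj
  obtain ⟨h2, hC'⟩ := hj
  set y := (j:ℝ)*α+β with hy
  have hypos : 0 < y := by linarith
  have hGy : 0 < Real.Gamma y := Real.Gamma_pos_of_pos hypos
  have hu : (0:ℝ) < y + α₀ - 1 := by linarith
  have hG : 0 < Real.Gamma (y + α₀) := Real.Gamma_pos_of_pos (by linarith)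
  have key : Real.Gamma y * (y+α₀-1) ^ α₀ ≤ Real.Gamma (y+α₀) := by
    have hconv := Real.Gamma_mul_add_mul_le_rpow_Gamma_mul_rpow_Gamma
      (s := y+α₀-1) (t := y+α₀) (a := α₀) (b := 1-α₀) hu (by linarith) hα₀
      (by linarith) (by ring)
    rw [show α₀*(y+α₀-1) + (1-α₀)*(y+α₀) = y by ring] at hconv
    have hG1 : Real.Gamma (y+α₀-1) = Real.Gamma (y+α₀) / (y+α₀-1) := by
      have h := Real.Gamma_add_one hu.ne'
      rw [show y+α₀-1+1 = y+α₀ by ring] at h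
      field_simp [h]
      exact h.symm
    rw [hG1, Real.div_rpow hG.le hu.le] at hconv
    have hGsplit : Real.Gamma (y+α₀) ^ α₀ * Real.Gamma (y+α₀) ^ (1-α₀) = Real.Gamma (y+α₀) := by
      rw [← Real.rpow_add hG]; norm_num
    rw [div_mul_eq_mul_div, hGsplit] at hconv
    rw [← le_div_iff₀ (Real.rpow_pos_of_pos hu _)]
    exact hconv
  have hmono : Real.Gamma (y+α₀) ≤ Real.Gamma (y+α) :=
    Real.Gamma_strictMonoOn_Ici.monotoneOn (by simp [Set.mem_Ici]; linarith)
      (by simp [Set.mem_Ici]; linarith) (by linarith)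
  have hw : (2*(|x|+1)) ≤ (y+α₀-1) ^ α₀ := by
    calc (2*(|x|+1)) = ((2*(|x|+1)) ^ (1/α₀)) ^ α₀ := by
          rw [← Real.rpow_mul (by positivity), one_div, inv_mul_cancel₀ hα₀.ne', Real.rpow_one]
      _ ≤ (y+α₀-1) ^ α₀ := Real.rpow_le_rpow hCnn hC' hα₀.le
  -- now the ratio bound
  have hGbig : Real.Gamma y * (2*(|x|+1)) ≤ Real.Gamma (y+α) := by
    calc Real.Gamma y * (2*(|x|+1)) ≤ Real.Gamma y * (y+α₀-1)^α₀ := by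
          exact mul_le_mul_of_nonneg_left hw hGy.le
      _ ≤ Real.Gamma (y+α₀) := key
      _ ≤ Real.Gamma (y+α) := hmono
  have hGα : 0 < Real.Gamma (y+α) := lt_of_lt_of_le (by positivity) hGbig
  have hcast : ((j+1:ℕ):ℝ)*α+β = y+α := by push_cast; ring
  rw [hcast]
  rw [Real.norm_of_nonneg (by positivity), Real.norm_of_nonneg (by positivity)]
  rw [abs_of_nonneg (inv_nonneg.2 hGα.le), abs_of_nonneg (inv_nonneg.2 hGy.le)]
  rw [pow_succ]
  calc |x|^j * |x| * (Real.Gamma (y+α))⁻¹ ≤ |x|^j * |x| * (Real.Gamma y * (2*(|x|+1)))⁻¹ := by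
        apply mul_le_mul_of_nonneg_left _ (by positivity)
        exact inv_anti₀ (by positivity) hGbig
    _ ≤ 2⁻¹ * (|x|^j * (Real.Gamma y)⁻¹) := by
        rw [mul_inv]
        have h1 : |x| * ((2*(|x|+1))⁻¹) ≤ 2⁻¹ := by
          rw [mul_inv_le_iff₀ (by positivity)]
          nlinarith [abs_nonneg x]
        calc |x|^j * |x| * ((Real.Gamma y)⁻¹ * (2*(|x|+1))⁻¹)
            = (|x| * (2*(|x|+1))⁻¹) * (|x|^j * (Real.Gamma y)⁻¹) := by ring
          _ ≤ 2⁻¹ * (|x|^j * (Real.Gamma y)⁻¹) := by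
              apply mul_le_mul_of_nonneg_right h1 (by positivity)

noncomputable def mlTerm (α μ β : ℝ) (j : ℕ) (s : ℝ) : ℝ :=
  (-μ)^j * (Real.Gamma ((j:ℝ)*α+β))⁻¹ * s ^ ((j:ℝ)*α+β-1)

noncomputable def mlAux (α μ β : ℝ) (s : ℝ) : ℝ := ∑' j : ℕ, mlTerm α μ β j s

lemma mlTerm_hasDerivAt {α : ℝ} (μ β : ℝ) (j : ℕ) {x : ℝ} (hx : 0 < x) :
    HasDerivAt (mlTerm α μ β j) (mlTerm α μ (β-1) j x) x := by
  have h1 : HasDerivAt (fun s : ℝ => s ^ ((j:ℝ)*α+β-1))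
      (((j:ℝ)*α+β-1) * x ^ ((j:ℝ)*α+β-1-1)) x :=
    Real.hasDerivAt_rpow_const (Or.inl hx.ne')
  have h2 := h1.const_mul ((-μ)^j * (Real.Gamma ((j:ℝ)*α+β))⁻¹)
  refine h2.congr_deriv ?_
  unfold mlTerm
  have key := inv_gamma_succ ((j:ℝ)*α+β-1)
  rw [show (j:ℝ)*α+β-1+1 = (j:ℝ)*α+β by ring] at key
  rw [show (j:ℝ)*α+(β-1) = (j:ℝ)*α+β-1 by ring, ← key]
  ring

lemma mlTerm_norm_summable {α : ℝ} (hα : 0 < α) (μ β : ℝ) {x : ℝ} (hx : 0 < x) :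
    Summable (fun j : ℕ => ‖mlTerm α μ β j x‖) := by
  have h := (summable_aux hα β (μ * x ^ α)).mul_right (x ^ (β-1))
  apply h.congr
  intro j
  have hxp : (0:ℝ) < x ^ ((j:ℝ)*α+β-1) := Real.rpow_pos_of_pos hx _
  have hsplit : x ^ ((j:ℝ)*α+β-1) = (x ^ α) ^ j * x ^ (β-1) := by
    rw [← Real.rpow_natCast (x ^ α) j, ← Real.rpow_mul hx.le,
      show α * (j:ℝ) = (j:ℝ)*α from mul_comm _ _, ← Real.rpow_add hx]
    ring_nf
  simp only [mlTerm, Real.norm_eq_abs, abs_mul, abs_pow, abs_neg,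
    abs_of_pos hxp, abs_of_pos (Real.rpow_pos_of_pos hx α)]
  rw [hsplit]
  ring

lemma mlAux_hasDerivAt {α : ℝ} (hα : 0 < α) (μ β : ℝ) {t : ℝ} (ht : 0 < t) :
    HasDerivAt (mlAux α μ β) (mlAux α μ (β-1) t) t := by
  set s : Set ℝ := Set.Ioo (t/2) (2*t) with hs
  have hts : t ∈ s := by constructor <;> [linarith; linarith]
  have hsub : s ⊆ Set.Ioi 0 := fun x hx => by
    simp only [Set.mem_Ioi]; have := hx.1; simp [hs] at this ⊢; linarith
  have ha : (0:ℝ) < t/2 := by linarith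
  have hb : (0:ℝ) < 2*t := by linarith
  set u : ℕ → ℝ := fun j => ‖mlTerm α μ (β-1) j (t/2)‖ + ‖mlTerm α μ (β-1) j (2*t)‖ with hu
  have hus : Summable u :=
    (mlTerm_norm_summable hα μ (β-1) ha).add (mlTerm_norm_summable hα μ (β-1) hb)
  have hbound : ∀ (j : ℕ), ∀ x ∈ s, ‖mlTerm α μ (β-1) j x‖ ≤ u j := by
    intro j x hx
    have hx0 : 0 < x := hsub hx
    have hxa : t/2 ≤ x := le_of_lt hx.1
    have hxb : x ≤ 2*t := le_of_lt hx.2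
    unfold mlTerm
    rw [hu]
    simp only [Real.norm_eq_abs, abs_mul]
    have hxe : x ^ ((j:ℝ)*α+(β-1)-1) ≤ (t/2) ^ ((j:ℝ)*α+(β-1)-1) + (2*t) ^ ((j:ℝ)*α+(β-1)-1) := by
      set e := (j:ℝ)*α+(β-1)-1
      rcases le_or_gt 0 e with he | he
      · have := Real.rpow_le_rpow hx0.le hxb he
        have h2 : (0:ℝ) ≤ (t/2) ^ e := (Real.rpow_pos_of_pos ha e).le
        linarith
      · have h1 := Real.rpow_le_rpow_of_nonpos ha hxa he.le
        have h2 : (0:ℝ) ≤ (2*t) ^ e := (Real.rpow_pos_of_pos hb e).le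
        linarith
    -- now bound the product
    have hGnn : (0:ℝ) ≤ |((Real.Gamma ((j:ℝ)*α+(β-1)))⁻¹)| := abs_nonneg _
    have hmm : |(-μ)^j| * |((Real.Gamma ((j:ℝ)*α+(β-1)))⁻¹)| *
        |x ^ ((j:ℝ)*α+(β-1)-1)| ≤ |(-μ)^j| * |((Real.Gamma ((j:ℝ)*α+(β-1)))⁻¹)| *
        ((t/2) ^ ((j:ℝ)*α+(β-1)-1) + (2*t) ^ ((j:ℝ)*α+(β-1)-1)) := by
      apply mul_le_mul_of_nonneg_left _ (by positivity)
      rw [abs_of_pos (Real.rpow_pos_of_pos hx0 _)]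
      exact hxe
    calc |(-μ)^j| * |((Real.Gamma ((j:ℝ)*α+(β-1)))⁻¹)| * |x ^ ((j:ℝ)*α+(β-1)-1)|
        ≤ |(-μ)^j| * |((Real.Gamma ((j:ℝ)*α+(β-1)))⁻¹)| *
          ((t/2) ^ ((j:ℝ)*α+(β-1)-1) + (2*t) ^ ((j:ℝ)*α+(β-1)-1)) := hmm
      _ = |(-μ)^j * (Real.Gamma ((j:ℝ)*α+(β-1)))⁻¹ * (t/2) ^ ((j:ℝ)*α+(β-1)-1)| +
          |(-μ)^j * (Real.Gamma ((j:ℝ)*α+(β-1)))⁻¹ * (2*t) ^ ((j:ℝ)*α+(β-1)-1)| := by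
          rw [abs_mul, abs_mul, abs_mul, abs_mul,
            abs_of_pos (Real.rpow_pos_of_pos ha _), abs_of_pos (Real.rpow_pos_of_pos hb _)]
          ring
  -- uniform convergence of the derivative series
  have hunif : TendstoUniformlyOn (fun (T : Finset ℕ) x => ∑ j ∈ T, mlTerm α μ (β-1) j x)
      (fun x => ∑' j, mlTerm α μ (β-1) j x) atTop s :=
    tendstoUniformlyOn_tsum hus fun j x hx => hbound j x hx
  have hres := hasDerivAt_of_tendstoUniformlyOn isOpen_Ioo hunif
    (Filter.Eventually.of_forall fun T x hx =>
      HasDerivAt.fun_sum fun j _ => mlTerm_hasDerivAt μ β j (hsub hx))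
    (fun x hx => ((mlTerm_norm_summable hα μ β (hsub hx)).of_norm).hasSum) hts
  exact hres

lemma mlAux_contDiffOn {α : ℝ} (hα : 0 < α) (μ : ℝ) (n : ℕ) :
    ∀ β, ContDiffOn ℝ n (mlAux α μ β) (Set.Ioi 0) := by
  induction n with
  | zero =>
    intro β
    rw [CharP.cast_eq_zero, contDiffOn_zero]
    exact fun x hx => (mlAux_hasDerivAt hα μ β hx).continuousAt.continuousWithinAt
  | succ n ih =>
    intro β
    rw [show ((n+1 : ℕ) : WithTop ℕ∞) = (n : WithTop ℕ∞) + 1 by norm_cast,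
      contDiffOn_succ_iff_deriv_of_isOpen isOpen_Ioi]
    refine ⟨fun x hx => (mlAux_hasDerivAt hα μ β hx).differentiableAt.differentiableWithinAt,
      by simp, ?_⟩
    exact (ih (β-1)).congr fun x hx => (mlAux_hasDerivAt hα μ β hx).deriv

lemma mlAux_iteratedDeriv {α : ℝ} (hα : 0 < α) (μ : ℝ) (n : ℕ) :
    ∀ β, ∀ t : ℝ, 0 < t → iteratedDeriv n (mlAux α μ β) t = mlAux α μ (β - n) t := by
  induction n with
  | zero => intro β t ht; simp
  | succ n ih =>
    intro β t ht
    rw [iteratedDeriv_succ']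
    have heq : deriv (mlAux α μ β) =ᶠ[𝓝 t] mlAux α μ (β-1) := by
      filter_upwards [isOpen_Ioi.mem_nhds (Set.mem_Ioi.2 ht)] with x hx
      exact (mlAux_hasDerivAt hα μ β hx).deriv
    rw [heq.iteratedDeriv_eq n, ih (β-1) t ht]
    norm_num
    ring_nf

lemma ml_eq_mlAux {α μ : ℝ} {s : ℝ} (hs : 0 < s) :
    mittagLefflerReal α 1 (-μ * s ^ α) = mlAux α μ 1 s := by
  unfold mittagLefflerReal mlAux
  apply tsum_congr
  intro j
  unfold mlTerm
  have h1 : s ^ ((j:ℝ)*α+1-1) = (s ^ α) ^ j := by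
    rw [← Real.rpow_natCast (s ^ α) j, ← Real.rpow_mul hs.le]
    ring_nf
  rw [h1, mul_pow, div_eq_mul_inv]
  ring

/-- For `α > 0`, `μ > 0` and a natural number `k ≥ 1`, the function `t ↦ E_{α,1}(−μ t^α)`
is `k` times differentiable at every `t > 0` and its `k`-th derivative there equals
`−μ t^{α−k} E_{α,α−k+1}(−μ t^α)`. -/
theorem mittagLeffler_iteratedDeriv (α μ : ℝ) (hα : 0 < α) (hμ : 0 < μ)
    (k : ℕ) (hk : 1 ≤ k) (t : ℝ) (ht : 0 < t) :
    ContDiffAt ℝ k (fun s : ℝ => mittagLefflerReal α 1 (-μ * s ^ α)) t ∧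
    iteratedDeriv k (fun s : ℝ => mittagLefflerReal α 1 (-μ * s ^ α)) t =
      -μ * t ^ (α - (k : ℝ)) * mittagLefflerReal α (α - (k : ℝ) + 1) (-μ * t ^ α) := by
  have heq : (fun s : ℝ => mittagLefflerReal α 1 (-μ * s ^ α)) =ᶠ[𝓝 t] mlAux α μ 1 := by
    filter_upwards [isOpen_Ioi.mem_nhds (Set.mem_Ioi.2 ht)] with x hx
    exact ml_eq_mlAux hx
  constructor
  · exact ((mlAux_contDiffOn hα μ k 1).contDiffAt
      (isOpen_Ioi.mem_nhds (Set.mem_Ioi.2 ht))).congr_of_eventuallyEq heq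
  · rw [heq.iteratedDeriv_eq k, mlAux_iteratedDeriv hα μ k 1 t ht]
    -- now compute mlAux α μ (1 - k) t
    have hsum : Summable fun j => mlTerm α μ (1-(k:ℝ)) j t :=
      (mlTerm_norm_summable hα μ _ ht).of_norm
    have hzero : mlTerm α μ (1-(k:ℝ)) 0 t = 0 := by
      unfold mlTerm
      have h0 : ((0:ℕ):ℝ)*α+(1-(k:ℝ)) = -((k-1 : ℕ) : ℝ) := by
        push_cast [hk]; ring
      rw [h0, Real.Gamma_neg_nat_eq_zero]
      simp
    unfold mlAux
    rw [Summable.tsum_eq_zero_add hsum, hzero, zero_add]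
    unfold mittagLefflerReal
    rw [← tsum_mul_left]
    apply tsum_congr
    intro i
    unfold mlTerm
    have harg : ((i+1 : ℕ):ℝ)*α+(1-(k:ℝ)) = (i:ℝ)*α+(α-(k:ℝ)+1) := by push_cast; ring
    have hexp : (i:ℝ)*α+(α-(k:ℝ)+1)-1 = (α-(k:ℝ)) + α*(i:ℝ) := by ring
    rw [harg, hexp, Real.rpow_add ht, Real.rpow_mul ht.le, Real.rpow_natCast,
      mul_pow, pow_succ, div_eq_mul_inv]
    ring
end

section
/- For every α ∈ (0,1) and every μ ≥ 0 one has E_{α,α}(−μ) ≥ 0. -/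
open Real Set Filter Topology
open scoped ContDiff

namespace MLpos

/-- Complete monotonicity on `(0, ∞)`. -/
def CMOn (f : ℝ → ℝ) : Prop :=
  ContDiffOn ℝ ∞ f (Ioi 0) ∧
    ∀ (n : ℕ), ∀ x ∈ Ioi (0:ℝ), 0 ≤ (-1)^n * iteratedDerivWithin n f (Ioi 0) x

lemma uD : UniqueDiffOn ℝ (Ioi (0:ℝ)) := isOpen_Ioi.uniqueDiffOn

lemma CMOn.congr {f g : ℝ → ℝ} (hf : CMOn f) (h : EqOn g f (Ioi 0)) : CMOn g := by
  refine ⟨hf.1.congr h, fun n x hx => ?_⟩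
  rw [iteratedDerivWithin_congr h hx]
  exact hf.2 n x hx

lemma CMOn.nonneg {f : ℝ → ℝ} (hf : CMOn f) {x : ℝ} (hx : x ∈ Ioi (0:ℝ)) : 0 ≤ f x := by
  have := hf.2 0 x hx
  simpa using this

lemma CMOn.neg_derivWithin {f : ℝ → ℝ} (hf : CMOn f) :
    CMOn (fun x => -(derivWithin f (Ioi 0) x)) := by
  constructor
  · exact (hf.1.derivWithin uD (le_of_eq (by rfl))).neg
  · intro n x hx
    have h1 : iteratedDerivWithin n (fun x => -(derivWithin f (Ioi 0) x)) (Ioi 0) x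
        = -(iteratedDerivWithin n (derivWithin f (Ioi 0)) (Ioi 0) x) :=
      iteratedDerivWithin_fun_neg _
    have h2 : iteratedDerivWithin n (derivWithin f (Ioi 0)) (Ioi 0) x
        = iteratedDerivWithin (n+1) f (Ioi 0) x := (congrFun iteratedDerivWithin_succ' x).symm
    rw [h1, h2]
    have e : (-1:ℝ)^n * -(iteratedDerivWithin (n+1) f (Ioi 0) x)
        = (-1:ℝ)^(n+1) * iteratedDerivWithin (n+1) f (Ioi 0) x := by ring
    rw [e]
    exact hf.2 (n+1) x hx

lemma CMOn.mul {f g : ℝ → ℝ} (hf : CMOn f) (hg : CMOn g) :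
    CMOn (fun x => f x * g x) := by
  have key : ∀ (n : ℕ) (f g : ℝ → ℝ), CMOn f → CMOn g → ∀ x ∈ Ioi (0:ℝ),
      0 ≤ (-1)^n * iteratedDerivWithin n (fun x => f x * g x) (Ioi 0) x := by
    intro n
    induction n with
    | zero =>
      intro f g hf hg x hx
      simpa using mul_nonneg (hf.nonneg hx) (hg.nonneg hx)
    | succ n IH =>
      intro f g hf hg x hx
      rw [iteratedDerivWithin_succ']
      have heq : EqOn (derivWithin (fun x => f x * g x) (Ioi 0))
          (fun y => -((fun y => -(derivWithin f (Ioi 0) y) * g y) y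
                      + (fun y => f y * -(derivWithin g (Ioi 0) y)) y)) (Ioi 0) := by
        intro y hy
        have hdf : DifferentiableWithinAt ℝ f (Ioi 0) y :=
          (hf.1.differentiableOn (by norm_num)) y hy
        have hdg : DifferentiableWithinAt ℝ g (Ioi 0) y :=
          (hg.1.differentiableOn (by norm_num)) y hy
        have := derivWithin_fun_mul hdf hdg
        simp only [this]
        ring
      rw [iteratedDerivWithin_congr heq hx]
      have c1 : ContDiffOn ℝ (n:ℕ∞) (fun y => -(derivWithin f (Ioi 0) y) * g y) (Ioi 0) := by
        exact (((hf.1.derivWithin uD (le_of_eq (by rfl))).neg).mul hg.1).of_le (by exact_mod_cast le_top)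
      have c2 : ContDiffOn ℝ (n:ℕ∞) (fun y => f y * -(derivWithin g (Ioi 0) y)) (Ioi 0) := by
        exact ((hf.1.mul ((hg.1.derivWithin uD (le_of_eq (by rfl))).neg))).of_le (by exact_mod_cast le_top)
      rw [show (fun y => -((fun y => -(derivWithin f (Ioi 0) y) * g y) y
                      + (fun y => f y * -(derivWithin g (Ioi 0) y)) y))
          = -((fun y => -(derivWithin f (Ioi 0) y) * g y)
              + (fun y => f y * -(derivWithin g (Ioi 0) y))) from rfl]
      rw [iteratedDerivWithin_neg, iteratedDerivWithin_add hx uD (c1 x hx) (c2 x hx)]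
      have A := IH _ _ hf.neg_derivWithin hg x hx
      have B := IH _ _ hf hg.neg_derivWithin x hx
      have e : (-1:ℝ)^(n+1) = -(-1:ℝ)^n := by ring
      rw [e]
      simp only [Pi.add_apply] at *
      nlinarith [A, B]
  exact ⟨hf.1.mul hg.1, fun n x hx => key n f g hf hg x hx⟩


lemma iteratedDerivWithin_zero_fun' (n : ℕ) {x : ℝ} (hx : x ∈ Ioi (0:ℝ)) :
    iteratedDerivWithin n (fun _ : ℝ => (0:ℝ)) (Ioi 0) x = 0 := by
  have h := iteratedDerivWithin_neg (n := n) (x := x) (s := Ioi 0) (fun _ : ℝ => (0:ℝ))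
  have e : (-fun _ : ℝ => (0:ℝ)) = (fun _ : ℝ => (0:ℝ)) := by funext y; simp
  rw [e] at h
  linarith

lemma CMOn.one : CMOn (fun _ : ℝ => (1:ℝ)) := by
  refine ⟨contDiffOn_const, fun n x hx => ?_⟩
  match n with
  | 0 => simp
  | (n+1) =>
    rw [iteratedDerivWithin_succ']
    have heq : EqOn (derivWithin (fun _ : ℝ => (1:ℝ)) (Ioi 0)) (fun _ : ℝ => (0:ℝ)) (Ioi 0) := by
      intro y hy
      exact congrFun (derivWithin_const _ _) y
    rw [iteratedDerivWithin_congr heq hx, iteratedDerivWithin_zero_fun' n hx]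
    simp

lemma CMOn.comp {f g : ℝ → ℝ} (hf : CMOn f) (hg0 : MapsTo g (Ioi 0) (Ioi 0))
    (hgs : ContDiffOn ℝ ∞ g (Ioi 0)) (hg' : CMOn (derivWithin g (Ioi 0))) :
    CMOn (fun x => f (g x)) := by
  have key : ∀ (n : ℕ) (f w : ℝ → ℝ), CMOn f → CMOn w → ∀ x ∈ Ioi (0:ℝ),
      0 ≤ (-1)^n * iteratedDerivWithin n (fun y => f (g y) * w y) (Ioi 0) x := by
    intro n
    induction n with
    | zero =>
      intro f w hf hw x hx
      simpa using mul_nonneg (hf.nonneg (hg0 hx)) (hw.nonneg hx)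
    | succ n IH =>
      intro f w hf hw x hx
      rw [iteratedDerivWithin_succ']
      set A : ℝ → ℝ := fun y => (fun z => -(derivWithin f (Ioi 0) z)) (g y)
          * (derivWithin g (Ioi 0) y * w y) with hA
      set B : ℝ → ℝ := fun y => f (g y) * (-(derivWithin w (Ioi 0) y)) with hB
      have hfg : ContDiffOn ℝ ∞ (fun y => f (g y)) (Ioi 0) := hf.1.comp hgs hg0
      have heq : EqOn (derivWithin (fun y => f (g y) * w y) (Ioi 0))
          (fun y => -(A y + B y)) (Ioi 0) := by
        intro y hy
        have hdf : DifferentiableWithinAt ℝ f (Ioi 0) (g y) :=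
          (hf.1.differentiableOn (by norm_num)) (g y) (hg0 hy)
        have hdg : DifferentiableWithinAt ℝ g (Ioi 0) y :=
          (hgs.differentiableOn (by norm_num)) y hy
        have hdw : DifferentiableWithinAt ℝ w (Ioi 0) y :=
          (hw.1.differentiableOn (by norm_num)) y hy
        have hdfg : DifferentiableWithinAt ℝ (fun y => f (g y)) (Ioi 0) y :=
          (hfg.differentiableOn (by norm_num)) y hy
        have h1 := derivWithin_fun_mul hdfg hdw
        have h2 : derivWithin (fun y => f (g y)) (Ioi 0) y
            = derivWithin f (Ioi 0) (g y) * derivWithin g (Ioi 0) y := by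
          have := derivWithin_comp (h := g) (h₂ := f) y hdf hdg hg0
          exact this
        simp only [h1, h2, hA, hB]
        ring
      rw [iteratedDerivWithin_congr heq hx]
      have cA : ContDiffOn ℝ (n:ℕ∞) A (Ioi 0) := by
        exact ((hf.neg_derivWithin.1.comp hgs hg0).mul (hg'.1.mul hw.1)).of_le
          (by exact_mod_cast le_top)
      have cB : ContDiffOn ℝ (n:ℕ∞) B (Ioi 0) := by
        exact (hfg.mul (hw.neg_derivWithin.1)).of_le (by exact_mod_cast le_top)
      rw [show (fun y => -(A y + B y)) = -(A + B) from rfl]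
      rw [iteratedDerivWithin_neg, iteratedDerivWithin_add hx uD (cA x hx) (cB x hx)]
      have hgw : CMOn (fun y => derivWithin g (Ioi 0) y * w y) := hg'.mul hw
      have hAkey := IH (fun z => -(derivWithin f (Ioi 0) z))
        (fun y => derivWithin g (Ioi 0) y * w y) hf.neg_derivWithin hgw x hx
      have hBkey := IH f (fun y => -(derivWithin w (Ioi 0) y)) hf hw.neg_derivWithin x hx
      have eA : iteratedDerivWithin n A (Ioi 0) x = iteratedDerivWithin n
          (fun y => (fun z => -(derivWithin f (Ioi 0) z)) (g y)
            * ((fun y => derivWithin g (Ioi 0) y * w y) y)) (Ioi 0) x := rfl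
      have eB : iteratedDerivWithin n B (Ioi 0) x = iteratedDerivWithin n
          (fun y => f (g y) * ((fun y => -(derivWithin w (Ioi 0) y)) y)) (Ioi 0) x := rfl
      have e : (-1:ℝ)^(n+1) = -(-1:ℝ)^n := by ring
      rw [e, eA, eB]
      nlinarith [hAkey, hBkey]
  exact ⟨hf.1.comp hgs hg0, fun n x hx => by
    have := key n f (fun _ => 1) hf CMOn.one x hx
    simpa using this⟩


lemma CMOn.const_mul {f : ℝ → ℝ} {c : ℝ} (hc : 0 ≤ c) (hf : CMOn f) :
    CMOn (fun x => c * f x) := by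
  refine ⟨contDiffOn_const.mul hf.1, fun n x hx => ?_⟩
  rw [iteratedDerivWithin_const_mul (n := n) hx uD c ((hf.1.of_le (by exact_mod_cast le_top)) x hx)]
  have := hf.2 n x hx
  calc (0:ℝ) ≤ c * ((-1)^n * iteratedDerivWithin n f (Ioi 0) x) := mul_nonneg hc this
  _ = (-1)^n * (c * iteratedDerivWithin n f (Ioi 0) x) := by ring

lemma iteratedDerivWithin_inv_add (μ : ℝ) (hμ : 0 ≤ μ) :
    ∀ (n : ℕ), ∀ x ∈ Ioi (0:ℝ), iteratedDerivWithin n (fun x => (x + μ)⁻¹) (Ioi 0) x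
      = (-1)^n * (n.factorial : ℝ) * (x + μ)^(-(n+1) : ℤ) := by
  intro n
  induction n with
  | zero =>
    intro x hx
    simp [zpow_neg_one]
  | succ n IH =>
    intro x hx
    rw [iteratedDerivWithin_succ]
    have hpos : (0:ℝ) < x + μ := by
      have : (0:ℝ) < x := hx
      linarith
    have hd : HasDerivAt (fun y : ℝ => (-1:ℝ)^n * (n.factorial : ℝ) * (y + μ)^(-(n+1) : ℤ))
        ((-1)^n * (n.factorial : ℝ) * ((-(n+1) : ℤ) * (x + μ)^(-(n+1) - 1 : ℤ))) x := by
      have h1 : HasDerivAt (fun y : ℝ => y + μ) 1 x := (hasDerivAt_id x).add_const μ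
      have h2 := hasDerivAt_zpow (-(n+1) : ℤ) (x + μ) (Or.inl (ne_of_gt hpos))
      have h3 := HasDerivAt.comp x h2 h1
      simpa [Function.comp, mul_one] using h3.const_mul ((-1:ℝ)^n * (n.factorial : ℝ))
    have heq : EqOn (iteratedDerivWithin n (fun x => (x + μ)⁻¹) (Ioi 0))
        (fun y => (-1:ℝ)^n * (n.factorial : ℝ) * (y + μ)^(-(n+1) : ℤ)) (Ioi 0) := fun y hy => IH y hy
    rw [derivWithin_congr heq (IH x hx)]
    rw [(hd.hasDerivWithinAt).derivWithin (uD x hx)]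
    have e1 : (-((n:ℤ)+1)) - 1 = -((n:ℤ)+1+1) := by ring
    push_cast
    rw [show (-((n:ℤ)+1)) - 1 = -((n:ℤ)+2) by ring]
    rw [show (-((n:ℤ)+1+1)) = -((n:ℤ)+2) by ring]
    rw [Nat.factorial_succ]
    push_cast
    ring

lemma cm_inv_add (μ : ℝ) (hμ : 0 ≤ μ) : CMOn (fun x => (x + μ)⁻¹) := by
  constructor
  · refine ContDiffOn.inv ?_ ?_
    · exact (contDiff_id.add contDiff_const).contDiffOn
    · intro x hx
      have : (0:ℝ) < x := hx
      positivity
  · intro n x hx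
    rw [iteratedDerivWithin_inv_add μ hμ n x hx]
    have hpos : (0:ℝ) < x + μ := by
      have : (0:ℝ) < x := hx
      linarith
    have : (-1:ℝ)^n * ((-1)^n * (n.factorial : ℝ) * (x + μ)^(-(n+1) : ℤ))
        = (n.factorial : ℝ) * (x + μ)^(-(n+1) : ℤ) := by
      rw [← mul_assoc, ← mul_assoc, ← pow_add]
      simp [pow_mul]
    rw [this]
    positivity

lemma iteratedDerivWithin_rpow (p : ℝ) :
    ∀ (n : ℕ), ∀ x ∈ Ioi (0:ℝ), iteratedDerivWithin n (fun x : ℝ => x ^ p) (Ioi 0) x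
      = (∏ i ∈ Finset.range n, (p - i)) * x ^ (p - n) := by
  intro n
  induction n with
  | zero =>
    intro x hx
    simp
  | succ n IH =>
    intro x hx
    have hxpos : (0:ℝ) < x := hx
    rw [iteratedDerivWithin_succ]
    have hd : HasDerivAt (fun y : ℝ => (∏ i ∈ Finset.range n, (p - i)) * y ^ (p - n))
        ((∏ i ∈ Finset.range n, (p - i)) * ((p - n) * x ^ (p - n - 1))) x := by
      exact (Real.hasDerivAt_rpow_const (Or.inl (ne_of_gt hxpos))).const_mul _
    have heq : EqOn (iteratedDerivWithin n (fun x : ℝ => x ^ p) (Ioi 0))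
        (fun y => (∏ i ∈ Finset.range n, (p - i)) * y ^ (p - n)) (Ioi 0) := fun y hy => IH y hy
    rw [derivWithin_congr heq (IH x hx)]
    rw [(hd.hasDerivWithinAt).derivWithin (uD x hx)]
    rw [Finset.prod_range_succ]
    have : p - n - 1 = p - (n + 1 : ℕ) := by push_cast; ring
    rw [this]
    ring

lemma contDiffOn_rpow (p : ℝ) : ContDiffOn ℝ ∞ (fun x : ℝ => x ^ p) (Ioi 0) := by
  intro x hx
  have : (0:ℝ) < x := hx
  exact (Real.contDiffAt_rpow_const_of_ne (ne_of_gt this)).contDiffWithinAt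

lemma cm_rpow {p : ℝ} (hp : p ≤ 0) : CMOn (fun x : ℝ => x ^ p) := by
  refine ⟨contDiffOn_rpow p, fun n x hx => ?_⟩
  have hxpos : (0:ℝ) < x := hx
  rw [iteratedDerivWithin_rpow p n x hx]
  have e : (-1:ℝ)^n * ((∏ i ∈ Finset.range n, (p - i)) * x ^ (p - n))
      = (∏ i ∈ Finset.range n, ((i:ℝ) - p)) * x ^ (p - n) := by
    rw [show (-1:ℝ)^n = ∏ _i ∈ Finset.range n, (-1:ℝ) by
      rw [Finset.prod_const, Finset.card_range]]
    rw [← mul_assoc, ← Finset.prod_mul_distrib]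
    congr 1
    exact Finset.prod_congr rfl (fun i _ => by ring)
  rw [e]
  apply mul_nonneg
  · apply Finset.prod_nonneg
    intro i _
    have : (0:ℝ) ≤ i := Nat.cast_nonneg i
    linarith
  · exact Real.rpow_nonneg hxpos.le _

/-- Complete monotonicity of `s ↦ (s^α + μ)⁻¹` on `(0, ∞)`. -/
lemma cm_H {α μ : ℝ} (hα0 : 0 < α) (hα1 : α ≤ 1) (hμ : 0 ≤ μ) :
    CMOn (fun s : ℝ => (s ^ α + μ)⁻¹) := by
  have hmaps : MapsTo (fun s : ℝ => s ^ α) (Ioi 0) (Ioi 0) := by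
    intro x hx
    exact Real.rpow_pos_of_pos hx α
  have hgs : ContDiffOn ℝ ∞ (fun s : ℝ => s ^ α) (Ioi 0) := contDiffOn_rpow α
  have hgderiv : EqOn (derivWithin (fun s : ℝ => s ^ α) (Ioi 0))
      (fun x => α * x ^ (α - 1)) (Ioi 0) := by
    intro x hx
    have hxpos : (0:ℝ) < x := hx
    exact ((Real.hasDerivAt_rpow_const (Or.inl (ne_of_gt hxpos))).hasDerivWithinAt).derivWithin
      (uD x hx)
  have hg' : CMOn (derivWithin (fun s : ℝ => s ^ α) (Ioi 0)) := by
    refine CMOn.congr ?_ hgderiv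
    exact (cm_rpow (by linarith : α - 1 ≤ 0)).const_mul hα0.le
  have := (cm_inv_add μ hμ).comp hmaps hgs hg'
  exact this

lemma iteratedDerivWithin_Ioi (n : ℕ) (f : ℝ → ℝ) {x : ℝ} (hx : x ∈ Ioi (0:ℝ)) :
    iteratedDerivWithin n f (Ioi 0) x = iteratedDeriv n f x := by
  rw [iteratedDerivWithin_eq_iteratedFDerivWithin, iteratedDeriv_eq_iteratedFDeriv,
    iteratedFDerivWithin_of_isOpen n isOpen_Ioi hx]

/-- The key sign fact: `(-1)^n * (d/ds)^n (s^α+μ)⁻¹ ≥ 0` on `(0,∞)`. -/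
lemma H_deriv_sign {α μ : ℝ} (hα0 : 0 < α) (hα1 : α ≤ 1) (hμ : 0 ≤ μ) (n : ℕ)
    {x : ℝ} (hx : (0:ℝ) < x) :
    0 ≤ (-1)^n * iteratedDeriv n (fun s : ℝ => (s ^ α + μ)⁻¹) x := by
  have := (cm_H hα0 hα1 hμ).2 n x hx
  rwa [iteratedDerivWithin_Ioi n _ hx] at this


/-! ### Part 3: the series expansion of the iterated derivatives of `H` -/

section Series

variable (α μ : ℝ)

/-- `β j = (j+1)α`. -/
noncomputable def Beta (j : ℕ) : ℝ := ((j:ℝ)+1) * α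

/-- `P n j = ∏_{i<n} (β j + i)`. -/
noncomputable def Pp (n j : ℕ) : ℝ := ∏ i ∈ Finset.range n, (Beta α j + i)

/-- Termwise `n`-th derivative of the geometric series of `H`. -/
noncomputable def Gf (n : ℕ) (s : ℝ) : ℝ :=
  ∑' j : ℕ, (-μ)^j * ((-1:ℝ)^n * Pp α n j) * s ^ (-(Beta α j) - n)

variable {α μ}
variable (hα0 : 0 < α) (hα1 : α < 1) (hμ : 0 ≤ μ)

include hα0 in
lemma Beta_pos (j : ℕ) : 0 < Beta α j := by
  have : (0:ℝ) < (j:ℝ)+1 := by positivity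
  exact mul_pos this hα0

include hα0 in
lemma Pp_nonneg (n j : ℕ) : 0 ≤ Pp α n j := by
  apply Finset.prod_nonneg
  intro i _
  have := Beta_pos hα0 (j := j)
  have : (0:ℝ) ≤ i := Nat.cast_nonneg i
  nlinarith [Beta_pos hα0 (j := j)]

include hα0 hα1 in
lemma Pp_le (n j : ℕ) : Pp α n j ≤ (((j:ℝ)+1) * (n+1))^n := by
  rw [show ((((j:ℝ)+1) * (n+1))^n : ℝ) = ∏ _i ∈ Finset.range n, (((j:ℝ)+1) * (n+1)) by
    rw [Finset.prod_const, Finset.card_range]]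
  apply Finset.prod_le_prod
  · intro i _
    nlinarith [Beta_pos hα0 (j := j), (Nat.cast_nonneg i : (0:ℝ) ≤ i)]
  · intro i hi
    have hi' : (i:ℝ) ≤ (n:ℝ) - 1 := by
      have := Finset.mem_range.mp hi
      have : (i:ℝ) + 1 ≤ (n:ℝ) := by exact_mod_cast this
      linarith
    have h1 : Beta α j + i ≤ ((j:ℝ)+1) + i := by
      have h2 : Beta α j ≤ (j:ℝ)+1 := by
        have : (0:ℝ) < (j:ℝ)+1 := by positivity
        calc Beta α j = ((j:ℝ)+1) * α := rfl
        _ ≤ ((j:ℝ)+1) * 1 := by nlinarith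
        _ = (j:ℝ)+1 := mul_one _
      linarith
    have h3 : ((j:ℝ)+1) + i ≤ ((j:ℝ)+1) * ((n:ℝ)+1) := by nlinarith [(Nat.cast_nonneg j : (0:ℝ) ≤ j)]
    linarith

/-- Summability helper: `∑ (j+1)^n q^j < ∞` for `0 ≤ q < 1`. -/
lemma summable_aux (n : ℕ) {q : ℝ} (h0 : 0 ≤ q) (h1 : q < 1) :
    Summable (fun j : ℕ => ((j:ℝ)+1)^n * q^j) := by
  have : ∀ j : ℕ, ((j:ℝ)+1)^n * q^j
      = ∑ k ∈ Finset.range (n+1), ((j:ℝ)^k * q^j * ((1:ℝ)^(n-k) * (n.choose k : ℝ))) := by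
    intro j
    rw [add_pow, Finset.sum_mul]
    congr 1
    funext k
    ring
  rw [funext this]
  apply summable_sum
  intro k _
  apply Summable.mul_right
  exact summable_pow_mul_geometric_of_norm_lt_one k (by rwa [Real.norm_eq_abs, abs_of_nonneg h0])


/-- The threshold `a = (μ+1)^(1/α)`. -/
noncomputable def aa : ℝ := (μ+1) ^ (α⁻¹)

include hμ in
lemma aa_pos : 0 < aa (α := α) (μ := μ) := Real.rpow_pos_of_pos (by linarith) _

include hα0 hμ in
lemma aa_rpow : (aa (α := α) (μ := μ)) ^ α = μ + 1 :=
  Real.rpow_inv_rpow (by linarith) hα0.ne'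

include hα0 hμ in
lemma lt_rpow_of_mem {s : ℝ} (hs : aa (α := α) (μ := μ) < s) : μ < s ^ α := by
  have h1 : (aa (α := α) (μ := μ)) ^ α < s ^ α :=
    Real.rpow_lt_rpow (aa_pos hμ).le hs hα0
  rw [aa_rpow hα0 hμ] at h1
  linarith

/-- Bound of a term of `Gf n` on `[a, ∞)`. -/
noncomputable def uB (n j : ℕ) : ℝ :=
  μ^j * Pp α n j * (aa (α := α) (μ := μ)) ^ (-(Beta α j) - n)

include hα0 hμ in
lemma term_bound {n j : ℕ} {y : ℝ} (hy : aa (α := α) (μ := μ) ≤ y) :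
    ‖(-μ)^j * ((-1:ℝ)^n * Pp α n j) * y ^ (-(Beta α j) - n)‖
      ≤ uB (α := α) (μ := μ) n j := by
  have hapos := aa_pos (α := α) hμ
  have hP := Pp_nonneg hα0 n j
  have hynn : 0 < y := lt_of_lt_of_le hapos hy
  rw [Real.norm_eq_abs, abs_mul, abs_mul, abs_mul, abs_pow, abs_pow, abs_neg, abs_neg,
    abs_one, one_pow, abs_of_nonneg hμ, abs_of_nonneg hP,
    abs_of_nonneg (Real.rpow_nonneg hynn.le _), one_mul]
  unfold uB
  have hrpow : y ^ (-(Beta α j) - n) ≤ (aa (α := α) (μ := μ)) ^ (-(Beta α j) - n) := by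
    apply Real.rpow_le_rpow_of_nonpos hapos hy
    have := Beta_pos hα0 (j := j)
    have : (0:ℝ) ≤ n := Nat.cast_nonneg n
    nlinarith [Beta_pos hα0 (j := j)]
  have h1 : (0:ℝ) ≤ μ^j * Pp α n j := by positivity
  nlinarith [hrpow, h1, mul_le_mul_of_nonneg_left hrpow h1]

include hα0 hα1 hμ in
lemma summable_uB (n : ℕ) : Summable (uB (α := α) (μ := μ) n) := by
  have hapos := aa_pos (α := α) hμ
  set A := aa (α := α) (μ := μ) with hA
  have haA : A ^ α = μ + 1 := aa_rpow hα0 hμ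
  set q : ℝ := μ / (μ + 1) with hq
  have hq0 : 0 ≤ q := by positivity
  have hq1 : q < 1 := by
    rw [hq, div_lt_one (by linarith)]
    linarith
  have hbsum : Summable (fun j : ℕ => (A ^ (-(n:ℝ)) * (μ+1)⁻¹ * ((n:ℝ)+1)^n) * (((j:ℝ)+1)^n * q^j)) :=
    Summable.mul_left _ (summable_aux n hq0 hq1)
  refine Summable.of_nonneg_of_le ?_ ?_ hbsum
  · intro j
    unfold uB
    have := Pp_nonneg hα0 n j
    positivity
  · intro j
    unfold uB
    have h1 : A ^ (-(Beta α j) - n) = (μ+1)^(-((j:ℝ)+1)) * A ^ (-(n:ℝ)) := by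
      rw [show -(Beta α j) - (n:ℝ) = α * (-((j:ℝ)+1)) + (-(n:ℝ)) by unfold Beta; ring]
      rw [Real.rpow_add hapos, Real.rpow_mul hapos.le, haA]
    rw [h1]
    have h2 : μ^j * ((μ+1:ℝ))^(-((j:ℝ)+1)) ≤ (μ+1)⁻¹ * q^j := by
      rw [show -((j:ℝ)+1) = -(((j+1:ℕ)):ℝ) by push_cast; ring, Real.rpow_neg (by linarith),
        Real.rpow_natCast]
      rw [pow_succ, hq, div_pow, mul_inv]
      rw [show (μ+1:ℝ)⁻¹ * (μ^j/(μ+1)^j) = μ^j * ((μ+1)^j * (μ+1))⁻¹ by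
        rw [mul_inv]; ring]
      rw [mul_inv]
    have h3 : Pp α n j ≤ (((j:ℝ)+1) * (n+1))^n := Pp_le hα0 hα1 n j
    have hPnn := Pp_nonneg hα0 n j
    have hAn : (0:ℝ) ≤ A ^ (-(n:ℝ)) := Real.rpow_nonneg hapos.le _
    have hμj : (0:ℝ) ≤ μ^j := by positivity
    have e : (A ^ (-(n:ℝ)) * (μ+1)⁻¹ * ((n:ℝ)+1)^n) * (((j:ℝ)+1)^n * q^j)
        = (((j:ℝ)+1) * ((n:ℝ)+1))^n * ((μ+1)⁻¹ * q^j) * A ^ (-(n:ℝ)) := by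
      rw [mul_pow]; ring
    rw [e]
    have h4 : μ^j * Pp α n j ≤ (((j:ℝ)+1) * ((n:ℝ)+1))^n * (μ^j) := by
      calc μ^j * Pp α n j ≤ μ^j * ((((j:ℝ)+1) * (n+1))^n) := by
            exact mul_le_mul_of_nonneg_left h3 hμj
      _ = (((j:ℝ)+1) * ((n:ℝ)+1))^n * (μ^j) := by push_cast; ring
    calc μ^j * Pp α n j * ((μ+1)^(-((j:ℝ)+1)) * A ^ (-(n:ℝ)))
        ≤ ((((j:ℝ)+1) * ((n:ℝ)+1))^n * (μ^j)) * ((μ+1)^(-((j:ℝ)+1)) * A ^ (-(n:ℝ))) := by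
          apply mul_le_mul_of_nonneg_right h4
          have : (0:ℝ) ≤ (μ+1:ℝ)^(-((j:ℝ)+1)) := Real.rpow_nonneg (by linarith) _
          positivity
      _ = (((j:ℝ)+1) * ((n:ℝ)+1))^n * (μ^j * (μ+1)^(-((j:ℝ)+1))) * A ^ (-(n:ℝ)) := by ring
      _ ≤ (((j:ℝ)+1) * ((n:ℝ)+1))^n * ((μ+1)⁻¹ * q^j) * A ^ (-(n:ℝ)) := by
          apply mul_le_mul_of_nonneg_right _ hAn
          apply mul_le_mul_of_nonneg_left h2 (by positivity)


include hα0 hμ in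
lemma Gf_zero {s : ℝ} (hs : aa (α := α) (μ := μ) < s) :
    Gf α μ 0 s = (s ^ α + μ)⁻¹ := by
  have hspos : 0 < s := lt_of_le_of_lt (aa_pos hμ).le hs
  have hy : μ < s ^ α := lt_rpow_of_mem hα0 hμ hs
  set y : ℝ := s ^ α with hydef
  have hypos : (0:ℝ) < y := Real.rpow_pos_of_pos hspos α
  have hterm : ∀ j : ℕ, (-μ)^j * ((-1:ℝ)^0 * Pp α 0 j) * s ^ (-(Beta α j) - (0:ℕ))
      = y⁻¹ * (-μ/y)^j := by
    intro j
    have h1 : Pp α 0 j = 1 := by simp [Pp]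
    have h2 : s ^ (-(Beta α j) - ((0:ℕ):ℝ)) = (y ^ (j+1))⁻¹ := by
      rw [show -(Beta α j) - ((0:ℕ):ℝ) = α * (-(((j:ℝ))+1)) by unfold Beta; push_cast; ring]
      rw [Real.rpow_mul hspos.le, ← hydef]
      rw [show (-(((j:ℝ))+1)) = -(((j+1:ℕ)):ℝ) by push_cast; ring]
      rw [Real.rpow_neg hypos.le, Real.rpow_natCast]
    rw [h1, h2]
    rw [div_pow]
    rw [pow_succ]
    field_simp
  unfold Gf
  rw [tsum_congr hterm, tsum_mul_left]
  have hnorm : ‖-μ/y‖ < 1 := by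
    rw [Real.norm_eq_abs, abs_div, abs_neg, abs_of_nonneg hμ, abs_of_pos hypos,
      div_lt_one hypos]
    exact hy
  rw [tsum_geometric_of_norm_lt_one hnorm]
  rw [show (1:ℝ) - (-μ/y) = (y + μ)/y by field_simp; ring]
  field_simp

omit hα0 in
lemma term_hasDerivAt (n j : ℕ) {y : ℝ} (hy : 0 < y) :
    HasDerivAt (fun z : ℝ => (-μ)^j * ((-1:ℝ)^n * Pp α n j) * z ^ (-(Beta α j) - n))
      ((-μ)^j * ((-1:ℝ)^(n+1) * Pp α (n+1) j) * y ^ (-(Beta α j) - (n+1:ℕ))) y := by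
  have h := (Real.hasDerivAt_rpow_const (x := y) (p := -(Beta α j) - n)
    (Or.inl (ne_of_gt hy))).const_mul ((-μ)^j * ((-1:ℝ)^n * Pp α n j))
  refine h.congr_deriv ?_
  rw [show Pp α (n+1) j = Pp α n j * (Beta α j + n) from Finset.prod_range_succ _ n]
  rw [show (-(Beta α j) - ((n+1:ℕ):ℝ)) = -(Beta α j) - n - 1 by push_cast; ring]
  ring

include hα0 hα1 hμ in
lemma Gf_hasDerivAt (n : ℕ) {s : ℝ} (hs : aa (α := α) (μ := μ) < s) :
    HasDerivAt (Gf α μ n) (Gf α μ (n+1) s) s := by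
  have hapos := aa_pos (α := α) hμ
  unfold Gf
  refine hasDerivAt_tsum_of_isPreconnected (u := uB (α := α) (μ := μ) (n+1))
    (summable_uB hα0 hα1 hμ (n+1)) isOpen_Ioi isPreconnected_Ioi
    (g := fun j z => (-μ)^j * ((-1:ℝ)^n * Pp α n j) * z ^ (-(Beta α j) - n))
    (g' := fun j z => (-μ)^j * ((-1:ℝ)^(n+1) * Pp α (n+1) j) * z ^ (-(Beta α j) - (n+1:ℕ)))
    (y₀ := aa (α := α) (μ := μ) + 1) ?_ ?_ ?_ ?_ hs
  · intro j y hy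
    exact term_hasDerivAt (μ := μ) n j (lt_of_le_of_lt hapos.le hy)
  · intro j y hy
    exact term_bound hα0 hμ (le_of_lt hy)
  · exact mem_Ioi.mpr (by linarith)
  · apply Summable.of_norm_bounded (summable_uB hα0 hα1 hμ n)
    intro j
    exact term_bound hα0 hμ (by linarith)

include hα0 hα1 hμ in
lemma iteratedDeriv_H_eq (n : ℕ) : ∀ {s : ℝ}, aa (α := α) (μ := μ) < s →
    iteratedDeriv n (fun z : ℝ => (z ^ α + μ)⁻¹) s = Gf α μ n s := by
  induction n with
  | zero =>
    intro s hs
    rw [iteratedDeriv_zero, Gf_zero hα0 hμ hs]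
  | succ n IH =>
    intro s hs
    rw [iteratedDeriv_succ]
    have hev : iteratedDeriv n (fun z : ℝ => (z ^ α + μ)⁻¹) =ᶠ[nhds s] Gf α μ n := by
      filter_upwards [isOpen_Ioi.mem_nhds (mem_Ioi.mpr hs)] with y hy
      exact IH hy
    rw [hev.deriv_eq]
    exact (Gf_hasDerivAt hα0 hα1 hμ n hs).deriv


variable (α) in
/-- `T n j = n^{1-β_j} ∏_{i<n}(β_j+i) / n!`, the Post-Widder approximant coefficient. -/
noncomputable def Tt (n j : ℕ) : ℝ :=
  (n:ℝ) ^ ((1:ℝ) - Beta α j) * Pp α n j / (n.factorial : ℝ)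

include hα0 in
lemma Tt_nonneg (n j : ℕ) : 0 ≤ Tt α n j := by
  unfold Tt
  have h1 : (0:ℝ) ≤ (n:ℝ) ^ ((1:ℝ) - Beta α j) := Real.rpow_nonneg (Nat.cast_nonneg n) _
  have h2 := Pp_nonneg hα0 n j
  exact div_nonneg (mul_nonneg h1 h2) (Nat.cast_nonneg _)

include hα0 in
lemma Tt_succ_eq (j : ℕ) {m : ℕ} (hm : 1 ≤ m) :
    Tt α (m+1) j = ((m:ℝ)/((m:ℝ)+1)) ^ (Beta α j) / Real.GammaSeq (Beta α j) m := by
  set β := Beta α j with hβdef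
  have hβ : 0 < β := Beta_pos hα0 j
  have hm0 : (0:ℝ) < (m:ℝ) := by exact_mod_cast hm
  have hprodpos : 0 < ∏ i ∈ Finset.range (m+1), (β + (i:ℝ)) := by
    apply Finset.prod_pos
    intro i _
    have : (0:ℝ) ≤ (i:ℝ) := Nat.cast_nonneg i
    linarith
  have hfac : (0:ℝ) < (m.factorial : ℝ) := by exact_mod_cast m.factorial_pos
  have hmb : (0:ℝ) < (m:ℝ)^β := Real.rpow_pos_of_pos hm0 β
  have hm1b : (0:ℝ) < ((m:ℝ)+1)^β := Real.rpow_pos_of_pos (by linarith) β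
  have hPp : Pp α (m+1) j = ∏ i ∈ Finset.range (m+1), (β + (i:ℝ)) := rfl
  unfold Tt Real.GammaSeq
  rw [hPp]
  have hcast1 : (((m+1:ℕ)):ℝ) = (m:ℝ)+1 := by push_cast; ring
  have hcast2 : (((m+1).factorial:ℕ):ℝ) = ((m:ℝ)+1) * (m.factorial:ℝ) := by
    rw [Nat.factorial_succ]; push_cast; ring
  rw [hcast1, hcast2]
  rw [Real.rpow_sub (by linarith : (0:ℝ) < (m:ℝ)+1), Real.rpow_one]
  rw [Real.div_rpow hm0.le (by linarith : (0:ℝ) ≤ (m:ℝ)+1)]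
  field_simp
  ring

include hα0 in
lemma tendsto_Tt (j : ℕ) :
    Tendsto (fun n : ℕ => Tt α n j) atTop (𝓝 (1 / Real.Gamma (Beta α j))) := by
  set β := Beta α j with hβdef
  have hβ : 0 < β := Beta_pos hα0 j
  have hΓ : 0 < Real.Gamma β := Real.Gamma_pos_of_pos hβ
  rw [← tendsto_add_atTop_iff_nat 1]
  have hmain : Tendsto (fun m : ℕ => ((m:ℝ)/((m:ℝ)+1)) ^ β / Real.GammaSeq β m) atTop
      (𝓝 (1 / Real.Gamma β)) := by
    have hnum : Tendsto (fun m : ℕ => ((m:ℝ)/((m:ℝ)+1)) ^ β) atTop (𝓝 1) := by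
      have h1 : Tendsto (fun m : ℕ => (m:ℝ)/((m:ℝ)+1)) atTop (𝓝 1) :=
        tendsto_natCast_div_add_atTop (1:ℝ)
      have h2 : ContinuousAt (fun x : ℝ => x ^ β) 1 :=
        Real.continuousAt_rpow_const 1 β (Or.inl one_ne_zero)
      have := h2.tendsto.comp h1
      rwa [Real.one_rpow] at this
    exact hnum.div (Real.GammaSeq_tendsto_Gamma β) hΓ.ne'
  apply hmain.congr'
  filter_upwards [eventually_ge_atTop 1] with m hm
  exact (Tt_succ_eq hα0 j hm).symm

include hα0 in
lemma Tt_antitone {j : ℕ} (hβ1 : 1 ≤ Beta α j) {n : ℕ} (hn : 1 ≤ n) :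
    Tt α (n+1) j ≤ Tt α n j := by
  set β := Beta α j with hβdef
  have hβ : 0 < β := Beta_pos hα0 j
  set x : ℝ := (n:ℝ) with hxdef
  have hx1 : (1:ℝ) ≤ x := by rw [hxdef]; exact_mod_cast hn
  have hx0 : (0:ℝ) < x := by linarith
  have hPnn : 0 ≤ Pp α n j := Pp_nonneg hα0 n j
  have hfac : (0:ℝ) < (n.factorial : ℝ) := by exact_mod_cast n.factorial_pos
  -- Bernoulli's inequality gives the key estimate
  have hbern : 1 + β * (1/x) ≤ (1 + 1/x) ^ β := by
    apply one_add_mul_self_le_rpow_one_add _ hβ1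
    have : 0 < 1/x := by positivity
    linarith
  have key : β + x ≤ x ^ ((1:ℝ) - β) * (x+1) ^ β := by
    have h1 : (1:ℝ) + 1/x = (x+1)/x := by field_simp
    have h2 : ((x+1)/x) ^ β = (x+1)^β / x^β := Real.div_rpow (by linarith) hx0.le β
    have h3 : x * ((1 + 1/x) ^ β) = x ^ ((1:ℝ) - β) * (x+1) ^ β := by
      rw [h1, h2, Real.rpow_sub hx0, Real.rpow_one]
      field_simp
    have h4 : x * (1 + β * (1/x)) ≤ x * ((1 + 1/x) ^ β) :=
      mul_le_mul_of_nonneg_left hbern hx0.le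
    have h5 : x * (1 + β * (1/x)) = x + β := by field_simp; try ring
    rw [h5, h3] at h4
    linarith
  have key2 : (x+1) ^ ((1:ℝ) - β) * (β + x) ≤ x ^ ((1:ℝ) - β) * (x+1) := by
    have hx1b : (0:ℝ) < (x+1) ^ ((1:ℝ) - β) := Real.rpow_pos_of_pos (by linarith) _
    have := mul_le_mul_of_nonneg_left key hx1b.le
    calc (x+1) ^ ((1:ℝ) - β) * (β + x)
        ≤ (x+1) ^ ((1:ℝ) - β) * (x ^ ((1:ℝ) - β) * (x+1) ^ β) := this
      _ = x ^ ((1:ℝ) - β) * ((x+1) ^ ((1:ℝ) - β) * (x+1) ^ β) := by ring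
      _ = x ^ ((1:ℝ) - β) * (x+1) := by
          rw [← Real.rpow_add (by linarith : (0:ℝ) < x+1)]
          norm_num
  -- now compare the two quotients
  unfold Tt
  rw [show Pp α (n+1) j = Pp α n j * (β + n) from Finset.prod_range_succ _ n]
  have hc1 : (((n+1:ℕ)):ℝ) = x + 1 := by push_cast; ring
  have hc2 : (((n+1).factorial:ℕ):ℝ) = (x+1) * (n.factorial:ℝ) := by
    rw [Nat.factorial_succ]; push_cast; ring
  rw [hc1, hc2]
  rw [div_le_div_iff₀ (by positivity) hfac]
  have e1 : (x+1) ^ ((1:ℝ) - β) * (Pp α n j * (β + x)) * (n.factorial:ℝ)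
      = ((x+1) ^ ((1:ℝ) - β) * (β + x)) * (Pp α n j * (n.factorial:ℝ)) := by ring
  have e2 : x ^ ((1:ℝ) - β) * Pp α n j * ((x+1) * (n.factorial:ℝ))
      = (x ^ ((1:ℝ) - β) * (x+1)) * (Pp α n j * (n.factorial:ℝ)) := by ring
  rw [e1, e2]
  exact mul_le_mul_of_nonneg_right key2 (by positivity)


include hα0 hα1 hμ in
/-- Nonnegativity of the Post–Widder approximant, from complete monotonicity. -/
lemma S_nonneg {n : ℕ} (hn1 : 1 ≤ n) (hna : aa (α := α) (μ := μ) < (n:ℝ)) :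
    0 ≤ ∑' j : ℕ, (-μ)^j * Tt α n j := by
  have hnpos : (0:ℝ) < (n:ℝ) := by exact_mod_cast hn1
  have hsign := H_deriv_sign hα0 hα1.le hμ n hnpos
  rw [iteratedDeriv_H_eq hα0 hα1 hμ n hna] at hsign
  set c : ℝ := (n:ℝ)^(((n:ℝ))+1)/(n.factorial:ℝ) with hc
  have hcpos : 0 ≤ c := by
    have : (0:ℝ) < (n.factorial:ℝ) := by exact_mod_cast n.factorial_pos
    have := Real.rpow_pos_of_pos hnpos (((n:ℝ))+1)
    positivity
  have hterm : ∀ j : ℕ, (-μ)^j * Tt α n j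
      = c * ((-1:ℝ)^n * ((-μ)^j * ((-1:ℝ)^n * Pp α n j) * (n:ℝ) ^ (-(Beta α j) - n))) := by
    intro j
    have hpow : (n:ℝ)^(((n:ℝ))+1) * (n:ℝ) ^ (-(Beta α j) - n) = (n:ℝ)^((1:ℝ) - Beta α j) := by
      rw [← Real.rpow_add hnpos]
      congr 1
      ring
    have hneg : (-1:ℝ)^n * (-1:ℝ)^n = 1 := by
      rw [← pow_add]
      exact Even.neg_one_pow ⟨n, by ring⟩
    have e1 : c * ((-1:ℝ)^n * ((-μ)^j * ((-1:ℝ)^n * Pp α n j) * (n:ℝ) ^ (-(Beta α j) - n)))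
        = ((-1:ℝ)^n * (-1:ℝ)^n) * ((-μ)^j *
            (((n:ℝ)^(((n:ℝ))+1) * (n:ℝ) ^ (-(Beta α j) - n)) * Pp α n j / (n.factorial:ℝ))) := by
      rw [hc]; ring
    rw [e1, hneg, hpow, one_mul]
    unfold Tt
    ring
  rw [tsum_congr hterm, tsum_mul_left, tsum_mul_left]
  have hG : Gf α μ n ((n:ℕ):ℝ)
      = ∑' j : ℕ, (-μ)^j * ((-1:ℝ)^n * Pp α n j) * ((n:ℕ):ℝ) ^ (-(Beta α j) - n) := rfl
  rw [← hG]
  exact mul_nonneg hcpos hsign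


include hα0 hα1 hμ in
lemma summable_Tt_bound {N0 : ℕ} (hN1 : 1 ≤ N0) (hN : 2*μ + 2 ≤ (N0:ℝ)^α) :
    Summable (fun j : ℕ => μ^j * Tt α N0 j) := by
  have hN0pos : (0:ℝ) < (N0:ℝ) := by exact_mod_cast hN1
  set x : ℝ := (N0:ℝ)^α with hxdef
  have hxpos : (0:ℝ) < x := Real.rpow_pos_of_pos hN0pos α
  have hx2 : (2:ℝ) ≤ x := by linarith
  set C : ℝ := (N0:ℝ) * ((N0:ℝ)+1)^N0 / (N0.factorial:ℝ) with hC
  have hfac : (0:ℝ) < (N0.factorial:ℝ) := by exact_mod_cast N0.factorial_pos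
  have hbsum : Summable (fun j : ℕ => C * (((j:ℝ)+1)^N0 * (1/2:ℝ)^j)) :=
    Summable.mul_left _ (summable_aux N0 (by norm_num) (by norm_num))
  refine Summable.of_nonneg_of_le ?_ ?_ hbsum
  · intro j
    have := Tt_nonneg hα0 N0 j
    positivity
  · intro j
    have hβ : 0 < Beta α j := Beta_pos hα0 j
    have h1 : (N0:ℝ)^((1:ℝ) - Beta α j) = (N0:ℝ) * ((x^(j+1:ℕ)):ℝ)⁻¹ := by
      rw [show (1:ℝ) - Beta α j = 1 + (-(Beta α j)) by ring, Real.rpow_add hN0pos,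
        Real.rpow_one, Real.rpow_neg hN0pos.le]
      congr 2
      rw [show Beta α j = α * (((j:ℝ))+1) by unfold Beta; ring, Real.rpow_mul hN0pos.le,
        ← hxdef, show (((j:ℝ))+1) = (((j+1:ℕ)):ℝ) by push_cast; ring, Real.rpow_natCast]
    have h2 : μ^j * (x^(j+1:ℕ))⁻¹ ≤ (1/2:ℝ)^j := by
      have hμx : μ ≤ x/2 := by linarith
      have hp1 : μ^j ≤ (x/2)^j := pow_le_pow_left₀ hμ hμx j
      have hxj : (0:ℝ) < x^(j+1) := pow_pos hxpos _
      rw [← div_eq_mul_inv, div_le_iff₀ hxj]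
      calc μ^j ≤ (x/2)^j := hp1
        _ = x^j * (1/2:ℝ)^j := by rw [div_pow, one_div, inv_pow]; ring
        _ ≤ (1/2:ℝ)^j * x^(j+1) := by
            rw [pow_succ]
            have h0 : (0:ℝ) ≤ (1/2:ℝ)^j := by positivity
            have h1' : x^j * 1 ≤ x^j * x := by
              apply mul_le_mul_of_nonneg_left (by linarith) (by positivity)
            nlinarith [pow_pos hxpos j]
    have h3 : Pp α N0 j ≤ ((j:ℝ)+1)^N0 * ((N0:ℝ)+1)^N0 := by
      calc Pp α N0 j ≤ (((j:ℝ)+1) * ((N0:ℝ)+1))^N0 := Pp_le hα0 hα1 N0 j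
        _ = ((j:ℝ)+1)^N0 * ((N0:ℝ)+1)^N0 := mul_pow _ _ _
    have hPnn : 0 ≤ Pp α N0 j := Pp_nonneg hα0 N0 j
    unfold Tt
    rw [h1]
    have e : μ^j * ((N0:ℝ) * (x^(j+1:ℕ))⁻¹ * Pp α N0 j / (N0.factorial:ℝ))
        = (μ^j * (x^(j+1:ℕ))⁻¹) * Pp α N0 j * ((N0:ℝ) / (N0.factorial:ℝ)) := by ring
    rw [e]
    calc (μ^j * (x^(j+1:ℕ))⁻¹) * Pp α N0 j * ((N0:ℝ) / (N0.factorial:ℝ))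
        ≤ ((1/2:ℝ)^j) * (((j:ℝ)+1)^N0 * ((N0:ℝ)+1)^N0) * ((N0:ℝ) / (N0.factorial:ℝ)) := by
          apply mul_le_mul_of_nonneg_right _ (by positivity)
          apply mul_le_mul h2 h3 hPnn (by positivity)
      _ = C * (((j:ℝ)+1)^N0 * (1/2:ℝ)^j) := by rw [hC]; ring

include hα0 in
lemma Tt_chain {j : ℕ} (hβ1 : 1 ≤ Beta α j) {N0 : ℕ} (h1 : 1 ≤ N0) :
    ∀ n, N0 ≤ n → Tt α n j ≤ Tt α N0 j := by
  intro n hn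
  induction n, hn using Nat.le_induction with
  | base => exact le_refl _
  | succ m hm IH =>
    exact le_trans (Tt_antitone hα0 hβ1 (le_trans h1 hm)) IH

include hα0 hα1 hμ in
lemma tendsto_S : Tendsto (fun n : ℕ => ∑' j : ℕ, (-μ)^j * Tt α n j) atTop
    (𝓝 (∑' j : ℕ, (-μ)^j / Real.Gamma (Beta α j))) := by
  set N0 : ℕ := max (⌈(2*μ+2) ^ (α⁻¹)⌉₊) 1 with hN0def
  have hN1 : 1 ≤ N0 := le_max_right _ _
  have hN : 2*μ + 2 ≤ (N0:ℝ)^α := by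
    have h1 : ((2*μ+2) ^ (α⁻¹) : ℝ) ≤ (N0:ℝ) := by
      calc ((2*μ+2) ^ (α⁻¹) : ℝ) ≤ (⌈(2*μ+2) ^ (α⁻¹)⌉₊ : ℝ) := Nat.le_ceil _
        _ ≤ (N0:ℝ) := by exact_mod_cast Nat.le_max_left _ 1
    have h2 : (((2*μ+2) ^ (α⁻¹) : ℝ))^α ≤ (N0:ℝ)^α :=
      Real.rpow_le_rpow (Real.rpow_nonneg (by linarith) _) h1 hα0.le
    rwa [Real.rpow_inv_rpow (by linarith) hα0.ne'] at h2
  set K : ℕ := ⌈α⁻¹⌉₊ with hKdef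
  set w : ℕ → ℝ := fun j => μ^j * Tt α N0 j
    + (if j < K then μ^j / Real.Gamma (Beta α j) + 1 else 0) with hw
  have hsum_w : Summable w := by
    apply Summable.add (summable_Tt_bound hα0 hα1 hμ hN1 hN)
    apply summable_of_ne_finset_zero (s := Finset.range K)
    intro j hj
    have : ¬ j < K := fun h => hj (Finset.mem_range.mpr h)
    simp [this]
  refine tendsto_tsum_of_dominated_convergence hsum_w ?_ ?_
  · intro j
    have h := (tendsto_Tt hα0 j).const_mul ((-μ)^j)
    rwa [mul_one_div] at h
  · have hev2 : ∀ᶠ n : ℕ in atTop, ∀ j ∈ Finset.range K,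
        ‖(-μ)^j * Tt α n j‖ < μ^j / Real.Gamma (Beta α j) + 1 := by
      rw [eventually_all_finset]
      intro j _
      have hβ : 0 < Beta α j := Beta_pos hα0 j
      have hΓ : 0 < Real.Gamma (Beta α j) := Real.Gamma_pos_of_pos hβ
      have h := ((tendsto_Tt hα0 j).const_mul ((-μ)^j)).norm
      have he : ‖(-μ)^j * (1 / Real.Gamma (Beta α j))‖ = μ^j / Real.Gamma (Beta α j) := by
        rw [norm_mul, Real.norm_eq_abs, Real.norm_eq_abs, abs_pow, abs_neg,
          abs_of_nonneg hμ, abs_of_nonneg (by positivity : (0:ℝ) ≤ 1 / Real.Gamma (Beta α j))]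
        rw [mul_one_div]
      rw [he] at h
      exact h.eventually_lt_const (by linarith)
    filter_upwards [eventually_ge_atTop N0, hev2] with n hn hb
    intro j
    have hTnn : 0 ≤ Tt α n j := Tt_nonneg hα0 n j
    have habs : ‖(-μ)^j * Tt α n j‖ = μ^j * Tt α n j := by
      rw [Real.norm_eq_abs, abs_mul, abs_pow, abs_neg, abs_of_nonneg hμ, abs_of_nonneg hTnn]
    by_cases hc : 1 ≤ Beta α j
    · have hchain : Tt α n j ≤ Tt α N0 j := Tt_chain hα0 hc hN1 n hn
      have h1 : μ^j * Tt α n j ≤ μ^j * Tt α N0 j :=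
        mul_le_mul_of_nonneg_left hchain (by positivity)
      have h2 : (0:ℝ) ≤ (if j < K then μ^j / Real.Gamma (Beta α j) + 1 else 0) := by
        split_ifs with h
        · have hΓ : 0 < Real.Gamma (Beta α j) := Real.Gamma_pos_of_pos (Beta_pos hα0 j)
          positivity
        · exact le_refl _
      rw [habs, hw]
      dsimp only
      linarith
    · push_neg at hc
      have hjK : j < K := by
        have h1 : ((j:ℝ)+1) * α < 1 := hc
        have h2 : ((j:ℝ)+1) < α⁻¹ := by
          rw [← one_div]
          exact (lt_div_iff₀ hα0).mpr h1
        have h3 : (α⁻¹ : ℝ) ≤ (K:ℝ) := Nat.le_ceil _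
        have h4 : (((j+1:ℕ)):ℝ) < (K:ℝ) := by push_cast; exact lt_of_lt_of_le h2 h3
        have h5 : j + 1 < K := by exact_mod_cast h4
        omega
      have hbj := hb j (Finset.mem_range.mpr hjK)
      have h1 : (0:ℝ) ≤ μ^j * Tt α N0 j :=
        mul_nonneg (by positivity) (Tt_nonneg hα0 N0 j)
      rw [hw]
      dsimp only
      rw [if_pos hjK]
      linarith [le_of_lt (habs ▸ hbj)]

end Series

end MLpos

/-- For `α ∈ (0,1)` and `μ ≥ 0`, `E_{α,α}(−μ) ≥ 0`. -/
theorem mittagLeffler_nonneg (α μ : ℝ) (hα0 : 0 < α) (hα1 : α < 1) (hμ : 0 ≤ μ) :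
    0 ≤ mittagLefflerReal α α (-μ) := by
  have hE : mittagLefflerReal α α (-μ)
      = ∑' j : ℕ, (-μ)^j / Real.Gamma (MLpos.Beta α j) := by
    unfold mittagLefflerReal
    apply tsum_congr
    intro j
    congr 2
    unfold MLpos.Beta
    ring
  rw [hE]
  refine ge_of_tendsto (MLpos.tendsto_S hα0 hα1 hμ) ?_
  have h1 : ∀ᶠ n : ℕ in Filter.atTop, MLpos.aa (α := α) (μ := μ) < (n:ℝ) :=
    tendsto_natCast_atTop_atTop.eventually_gt_atTop _
  filter_upwards [h1, Filter.eventually_ge_atTop 1] with n hn1 hn2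
  exact MLpos.S_nonneg hα0 hα1 hμ hn2 hn1
end

section
/- Let α ∈ (0,1) and μ > 0. Then for every η > 0 the function t ↦ t^{α−1} E_{α,α}(−μ t^α) is integrable on (0, η) and ∫_0^η t^{α−1} E_{α,α}(−μ t^α) dt = (1 − E_{α,1}(−μ η^α)) / μ. -/
open Real MeasureTheory

/-- Log-convexity lower bound for the Gamma ratio: `y Γ(y) ≤ Γ(y+α) (y+α)^{1-α}`. -/
lemma gamma_ratio_lb {α : ℝ} (hα0 : 0 < α) (hα1 : α < 1) {y : ℝ} (hy : 0 < y) :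
    y * Real.Gamma y ≤ Real.Gamma (y + α) * (y + α) ^ (1 - α) := by
  have hyα : 0 < y + α := by linarith
  have hyα1 : 0 < y + α + 1 := by linarith
  have hΓy := Real.Gamma_pos_of_pos hy
  have hΓyα := Real.Gamma_pos_of_pos hyα
  have h1 : Real.Gamma (y + 1) = y * Real.Gamma y := Real.Gamma_add_one hy.ne'
  have h2 : Real.Gamma (y + α + 1) = (y + α) * Real.Gamma (y + α) :=
    Real.Gamma_add_one hyα.ne'
  have key : Real.log (y * Real.Gamma y) ≤
      Real.log (Real.Gamma (y + α)) + (1 - α) * Real.log (y + α) := by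
    have hc := Real.convexOn_log_Gamma.2 (Set.mem_Ioi.2 hyα) (Set.mem_Ioi.2 hyα1)
      hα0.le (by linarith : (0:ℝ) ≤ 1 - α) (by ring)
    simp only [Function.comp, smul_eq_mul] at hc
    have harg : α * (y + α) + (1 - α) * (y + α + 1) = y + 1 := by ring
    rw [harg, h1, h2, Real.log_mul hyα.ne' hΓyα.ne'] at hc
    calc Real.log (y * Real.Gamma y)
        ≤ α * Real.log (Real.Gamma (y + α)) +
            (1 - α) * (Real.log (y + α) + Real.log (Real.Gamma (y + α))) := hc
      _ = Real.log (Real.Gamma (y + α)) + (1 - α) * Real.log (y + α) := by ring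
  calc y * Real.Gamma y = Real.exp (Real.log (y * Real.Gamma y)) :=
        (Real.exp_log (by positivity)).symm
    _ ≤ Real.exp (Real.log (Real.Gamma (y + α)) + (1 - α) * Real.log (y + α)) :=
        Real.exp_le_exp.2 key
    _ = Real.Gamma (y + α) * (y + α) ^ (1 - α) := by
        rw [Real.exp_add, Real.exp_log hΓyα, Real.rpow_def_of_pos hyα]
        ring_nf

/-- Summability of the Mittag-Leffler series. -/
lemma ml_summable {α : ℝ} (hα0 : 0 < α) (hα1 : α < 1) {β : ℝ} (hβ : 0 < β) (x : ℝ) :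
    Summable (fun j : ℕ => x ^ j / Real.Gamma ((j : ℝ) * α + β)) := by
  apply summable_of_ratio_norm_eventually_le (r := 1/2) (by norm_num)
  have htend2 : Filter.Tendsto (fun j : ℕ => (j : ℝ) * α + β) Filter.atTop Filter.atTop :=
    Filter.tendsto_atTop_add_const_right _ β
      (Filter.Tendsto.atTop_mul_const hα0 tendsto_natCast_atTop_atTop)
  have htend : Filter.Tendsto (fun j : ℕ => ((j : ℝ) * α + β + α) ^ α)
      Filter.atTop Filter.atTop :=
    (tendsto_rpow_atTop hα0).comp (Filter.tendsto_atTop_add_const_right _ α htend2)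
  filter_upwards [htend.eventually_ge_atTop (4 * |x|), htend2.eventually_ge_atTop α]
    with j hA hy'
  set y : ℝ := (j : ℝ) * α + β with hydef
  have hy : 0 < y := lt_of_lt_of_le hα0 hy'
  have hyα : 0 < y + α := by linarith
  have hΓy := Real.Gamma_pos_of_pos hy
  have hΓyα := Real.Gamma_pos_of_pos hyα
  have hB : (0:ℝ) < (y + α) ^ (1 - α) := Real.rpow_pos_of_pos hyα _
  have hAB : (y + α) ^ α * (y + α) ^ (1 - α) = y + α := by
    rw [← Real.rpow_add hyα]; norm_num
  have h2 : 2 * |x| * (y + α) ^ (1 - α) ≤ y := by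
    nlinarith [mul_le_mul_of_nonneg_right hA hB.le]
  have hΓ : 2 * |x| * Real.Gamma y ≤ Real.Gamma (y + α) := by
    have hlb := gamma_ratio_lb hα0 hα1 hy
    have h3 : (2 * |x| * Real.Gamma y) * ((y + α) ^ (1 - α)) ≤
        Real.Gamma (y + α) * ((y + α) ^ (1 - α)) := by
      nlinarith [mul_le_mul_of_nonneg_right h2 hΓy.le]
    exact le_of_mul_le_mul_right h3 hB
  have harg1 : ((j:ℝ) + 1) * α + β = y + α := by rw [hydef]; ring
  rcases eq_or_ne x 0 with rfl | hx0
  · rw [zero_pow (Nat.succ_ne_zero j), zero_div, norm_zero]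
    positivity
  have hx : 0 < |x| := abs_pos.2 hx0
  have hd : 0 < 2 * |x| * Real.Gamma y := by positivity
  push_cast
  calc ‖x ^ (j + 1) / Real.Gamma (((j:ℝ) + 1) * α + β)‖
      = |x| ^ (j + 1) / Real.Gamma (y + α) := by
        rw [harg1, Real.norm_eq_abs, abs_div, abs_pow, abs_of_pos hΓyα]
    _ ≤ |x| ^ (j + 1) / (2 * |x| * Real.Gamma y) := by
        apply div_le_div_of_nonneg_left (by positivity) hd hΓ
    _ = 1 / 2 * (|x| ^ j / Real.Gamma y) := by
        rw [pow_succ]; field_simp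
    _ = 1 / 2 * ‖x ^ j / Real.Gamma ((j:ℝ) * α + β)‖ := by
        rw [Real.norm_eq_abs, abs_div, abs_pow, abs_of_pos hΓy]

set_option maxHeartbeats 1000000 in
/-- For `α ∈ (0,1)`, `μ > 0` and `η > 0`, the function `t ↦ t^{α−1} E_{α,α}(−μ t^α)` is
integrable on `(0, η)` and
`∫_0^η t^{α−1} E_{α,α}(−μ t^α) dt = (1 − E_{α,1}(−μ η^α)) / μ`. -/
theorem mittagLeffler_integral (α μ η : ℝ) (hα0 : 0 < α) (hα1 : α < 1)
    (hμ : 0 < μ) (hη : 0 < η) :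
    IntegrableOn (fun t : ℝ => t ^ (α - 1) * mittagLefflerReal α α (-μ * t ^ α))
      (Set.Ioo 0 η) ∧
    ∫ t in Set.Ioo (0 : ℝ) η, t ^ (α - 1) * mittagLefflerReal α α (-μ * t ^ α) =
      (1 - mittagLefflerReal α 1 (-μ * η ^ α)) / μ := by
  have hs : MeasurableSet (Set.Ioo (0:ℝ) η) := measurableSet_Ioo
  set s : Set ℝ := Set.Ioo 0 η with hsdef
  set F : ℕ → ℝ → ℝ := fun j t =>
    (-μ) ^ j / Real.Gamma ((j : ℝ) * α + α) * t ^ ((j : ℝ) * α + α - 1) with hFdef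
  have hexp : ∀ j : ℕ, (0:ℝ) < (j : ℝ) * α + α := fun j => by positivity
  have hΓpos : ∀ j : ℕ, 0 < Real.Gamma ((j : ℝ) * α + α) :=
    fun j => Real.Gamma_pos_of_pos (hexp j)
  -- term-wise identity on s
  have hterm : ∀ t ∈ s, ∀ j : ℕ,
      t ^ (α - 1) * ((-μ * t ^ α) ^ j / Real.Gamma ((j : ℝ) * α + α)) = F j t := by
    intro t ht j
    have ht0 : (0:ℝ) < t := ht.1
    have h1 : (-μ * t ^ α) ^ j = (-μ) ^ j * t ^ (α * (j : ℝ)) := by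
      rw [mul_pow, ← Real.rpow_natCast (t ^ α) j, ← Real.rpow_mul ht0.le]
    have h2 : t ^ (α - 1) * t ^ (α * (j : ℝ)) = t ^ ((j : ℝ) * α + α - 1) := by
      rw [← Real.rpow_add ht0]
      congr 1; ring
    simp only [hFdef]
    rw [h1, ← h2]
    ring
  -- pointwise identity on s
  have hpt : Set.EqOn (fun t : ℝ => t ^ (α - 1) * mittagLefflerReal α α (-μ * t ^ α))
      (fun t => ∑' j, F j t) s := by
    intro t ht
    simp only [mittagLefflerReal]
    rw [← tsum_mul_left]
    exact tsum_congr fun j => hterm t ht j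
  -- summability of F at each point of s
  have hsum_t : ∀ t ∈ s, Summable fun j => F j t := by
    intro t ht
    have := (ml_summable hα0 hα1 hα0 (-μ * t ^ α)).mul_left (t ^ (α - 1))
    exact this.congr fun j => hterm t ht j
  -- integrability of each term
  have hrpow_int : ∀ j : ℕ, IntegrableOn (fun t : ℝ => t ^ ((j : ℝ) * α + α - 1)) s := by
    intro j
    have h := intervalIntegral.intervalIntegrable_rpow' (a := 0) (b := η)
      (r := (j : ℝ) * α + α - 1) (by linarith [hexp j])
    rwa [intervalIntegrable_iff_integrableOn_Ioo_of_le hη.le] at h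
  have hFint : ∀ j : ℕ, IntegrableOn (F j) s := fun j =>
    (hrpow_int j).const_mul _
  -- value of the basic rpow integral
  have hint_rpow : ∀ r : ℝ, -1 < r → ∫ t in s, t ^ r = η ^ (r + 1) / (r + 1) := by
    intro r hr
    rw [hsdef, ← integral_Ioc_eq_integral_Ioo, ← intervalIntegral.integral_of_le hη.le,
      integral_rpow (Or.inl hr), Real.zero_rpow (by linarith), sub_zero]
  -- integral of c^j/Γ(jα+α) * t^(jα+α-1)
  have hcomp : ∀ (c : ℝ) (j : ℕ),
      ∫ t in s, c ^ j / Real.Gamma ((j : ℝ) * α + α) * t ^ ((j : ℝ) * α + α - 1) =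
        η ^ α * ((c * η ^ α) ^ j / Real.Gamma ((j : ℝ) * α + (α + 1))) := by
    intro c j
    rw [MeasureTheory.integral_const_mul, hint_rpow _ (by linarith [hexp j])]
    have h1 : (j : ℝ) * α + α - 1 + 1 = (j : ℝ) * α + α := by ring
    rw [h1]
    have hg : Real.Gamma ((j : ℝ) * α + (α + 1)) =
        ((j : ℝ) * α + α) * Real.Gamma ((j : ℝ) * α + α) := by
      rw [← Real.Gamma_add_one (hexp j).ne']
      congr 1; ring
    have hη1 : η ^ ((j : ℝ) * α + α) = (η ^ α) ^ j * η ^ α := by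
      rw [← Real.rpow_natCast (η ^ α) j, ← Real.rpow_mul hη.le, ← Real.rpow_add hη]
      congr 1; ring
    rw [hg, hη1, mul_pow]
    have hΓ := (hΓpos j).ne'
    have he := (hexp j).ne'
    field_simp
  -- value of each integral
  have hFval : ∀ j : ℕ, ∫ t in s, F j t =
      η ^ α * ((-μ * η ^ α) ^ j / Real.Gamma ((j : ℝ) * α + (α + 1))) :=
    fun j => hcomp (-μ) j
  -- integral of the norms
  have hnorm : ∀ j : ℕ, ∫ t in s, ‖F j t‖ =
      η ^ α * ((μ * η ^ α) ^ j / Real.Gamma ((j : ℝ) * α + (α + 1))) := by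
    intro j
    rw [MeasureTheory.setIntegral_congr_fun hs
      (g := fun t => μ ^ j / Real.Gamma ((j : ℝ) * α + α) * t ^ ((j : ℝ) * α + α - 1)) ?_]
    · exact hcomp μ j
    · intro t ht
      have ht0 : (0:ℝ) < t := ht.1
      simp only [hFdef, Real.norm_eq_abs, abs_mul, abs_div, abs_pow, abs_neg,
        abs_of_pos hμ, abs_of_pos (hΓpos j),
        abs_of_nonneg (Real.rpow_nonneg ht0.le ((j : ℝ) * α + α - 1))]
  have hβ1 : (0:ℝ) < α + 1 := by linarith
  have hsumnorm : Summable fun j => ∫ t in s, ‖F j t‖ := by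
    have := (ml_summable hα0 hα1 hβ1 (μ * η ^ α)).mul_left (η ^ α)
    exact this.congr fun j => (hnorm j).symm
  -- measurability of the whole function
  have hmeas : AEStronglyMeasurable
      (fun t : ℝ => t ^ (α - 1) * mittagLefflerReal α α (-μ * t ^ α))
      (volume.restrict s) := by
    apply aestronglyMeasurable_of_tendsto_ae (u := Filter.atTop)
      (f := fun N t => ∑ j ∈ Finset.range N, F j t)
    · intro N
      exact Finset.aestronglyMeasurable_fun_sum _ fun j _ => (hFint j).aestronglyMeasurable
    · filter_upwards [ae_restrict_mem hs] with t ht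
      have h := ((hsum_t t ht).hasSum).tendsto_sum_nat
      have heq : t ^ (α - 1) * mittagLefflerReal α α (-μ * t ^ α) = ∑' j, F j t := hpt ht
      rw [heq]
      exact h
  -- the uniform bound constant
  set C : ℝ := ∑' j : ℕ, (μ * η ^ α) ^ j / Real.Gamma ((j : ℝ) * α + α) with hCdef
  have hCsum : Summable fun j : ℕ => (μ * η ^ α) ^ j / Real.Gamma ((j : ℝ) * α + α) :=
    ml_summable hα0 hα1 hα0 (μ * η ^ α)
  have habs : ∀ t ∈ s, ‖mittagLefflerReal α α (-μ * t ^ α)‖ ≤ C := by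
    intro t ht
    have ht0 : (0:ℝ) < t := ht.1
    have hxt : |(-μ * t ^ α)| ≤ μ * η ^ α := by
      rw [abs_mul, abs_neg, abs_of_pos hμ, abs_of_nonneg (Real.rpow_nonneg ht0.le α)]
      exact mul_le_mul_of_nonneg_left
        (Real.rpow_le_rpow ht0.le ht.2.le hα0.le) hμ.le
    have hle : ∀ j : ℕ, ‖(-μ * t ^ α) ^ j / Real.Gamma ((j : ℝ) * α + α)‖ ≤
        (μ * η ^ α) ^ j / Real.Gamma ((j : ℝ) * α + α) := by
      intro j
      rw [Real.norm_eq_abs, abs_div, abs_pow, abs_of_pos (hΓpos j)]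
      gcongr
    have hsumabs : Summable fun j : ℕ =>
        ‖(-μ * t ^ α) ^ j / Real.Gamma ((j : ℝ) * α + α)‖ :=
      Summable.of_nonneg_of_le (fun j => norm_nonneg _) hle hCsum
    calc ‖mittagLefflerReal α α (-μ * t ^ α)‖
        ≤ ∑' j : ℕ, ‖(-μ * t ^ α) ^ j / Real.Gamma ((j : ℝ) * α + α)‖ := by
          simp only [mittagLefflerReal]
          exact norm_tsum_le_tsum_norm hsumabs
      _ ≤ C := Summable.tsum_le_tsum hle hsumabs hCsum
  have hC0 : 0 ≤ C := tsum_nonneg fun j => by positivity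
  -- integrability
  have hint : IntegrableOn (fun t : ℝ => t ^ (α - 1) * mittagLefflerReal α α (-μ * t ^ α)) s := by
    have hg : IntegrableOn (fun t : ℝ => C * t ^ (α - 1)) s := by
      apply Integrable.const_mul
      have h := intervalIntegral.intervalIntegrable_rpow' (a := 0) (b := η)
        (r := α - 1) (by linarith)
      rwa [intervalIntegrable_iff_integrableOn_Ioo_of_le hη.le] at h
    apply Integrable.mono' hg hmeas
    filter_upwards [ae_restrict_mem hs] with t ht
    have ht0 : (0:ℝ) < t := ht.1
    have hn1 : ‖t ^ (α - 1)‖ = t ^ (α - 1) := by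
      rw [Real.norm_eq_abs, abs_of_nonneg (Real.rpow_nonneg ht0.le _)]
    rw [norm_mul, hn1]
    calc t ^ (α - 1) * ‖mittagLefflerReal α α (-μ * t ^ α)‖
        ≤ t ^ (α - 1) * C :=
          mul_le_mul_of_nonneg_left (habs t ht) (Real.rpow_nonneg ht0.le _)
      _ = C * t ^ (α - 1) := mul_comm _ _
  refine ⟨hint, ?_⟩
  -- exchange sum and integral
  have hswap := MeasureTheory.integral_tsum_of_summable_integral_norm
    (μ := volume.restrict s) (F := F) (fun j => hFint j) hsumnorm
  rw [MeasureTheory.setIntegral_congr_fun hs hpt, ← hswap,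
    tsum_congr hFval, tsum_mul_left]
  -- final algebra with the Mittag-Leffler function at β = 1
  set x : ℝ := -μ * η ^ α with hxdef
  set S : ℝ := ∑' j : ℕ, x ^ j / Real.Gamma ((j : ℝ) * α + (α + 1)) with hSdef
  have hE : mittagLefflerReal α 1 x = 1 + x * S := by
    rw [mittagLefflerReal, Summable.tsum_eq_zero_add (ml_summable hα0 hα1 one_pos x)]
    have h0 : x ^ 0 / Real.Gamma (((0:ℕ) : ℝ) * α + 1) = 1 := by
      norm_num [Real.Gamma_one]
    rw [h0]
    congr 1
    have hterm2 : ∀ k : ℕ, x ^ (k + 1) / Real.Gamma ((((k:ℕ) + 1 : ℕ) : ℝ) * α + 1) =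
        x * (x ^ k / Real.Gamma ((k : ℝ) * α + (α + 1))) := by
      intro k
      have harg : (((k:ℕ) + 1 : ℕ) : ℝ) * α + 1 = (k : ℝ) * α + (α + 1) := by
        push_cast; ring
      rw [harg, pow_succ]
      ring
    rw [tsum_congr hterm2, tsum_mul_left, hSdef]
  rw [hE, hxdef]
  field_simp
  ring
end

section
/- Let α ∈ (0,1) and μ ≥ 0, and define y(t) = E_{α,1}(−μ t^α) for t ≥ 0. Then y(0) = 1, y is differentiable on (0,∞), for every t > 0 the function s ↦ (t−s)^{−α} y′(s) is integrable on (0,t), and the Caputo fractional derivative satisfies ∂_t^α y(t) = (1/Γ(1−α)) ∫_0^t (t−s)^{−α} y′(s) ds = −μ E_{α,1}(−μ t^α) for every t > 0. -/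
open Real MeasureTheory

lemma gammaFactMul (n : ℕ) {s : ℝ} (hs : s ∈ Set.Icc (1:ℝ) 2) :
    (Nat.factorial n : ℝ) * Real.Gamma s ≤ Real.Gamma (s + n) := by
  induction n with
  | zero => simp
  | succ n ih =>
    have hs1 : (1:ℝ) ≤ s := hs.1
    have h0 : s + n ≠ 0 := by positivity
    have he : Real.Gamma (s + ((n:ℕ)+1:ℕ) : ℝ) = (s + n) * Real.Gamma (s + n) := by
      rw [show (s + ((n:ℕ)+1:ℕ) : ℝ) = (s + n) + 1 by push_cast; ring, Real.Gamma_add_one h0]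
    rw [he]
    have hΓpos : 0 < Real.Gamma (s + n) := Real.Gamma_pos_of_pos (by positivity)
    calc (Nat.factorial (n+1) : ℝ) * Real.Gamma s
        = (n+1) * ((Nat.factorial n : ℝ) * Real.Gamma s) := by
          push_cast [Nat.factorial_succ]; ring
      _ ≤ (n+1) * Real.Gamma (s + n) := by
          apply mul_le_mul_of_nonneg_left ih (by positivity)
      _ ≤ (s + n) * Real.Gamma (s + n) := by
          apply mul_le_mul_of_nonneg_right _ hΓpos.le
          push_cast; linarith

lemma gammaLB : ∃ c > 0, ∀ r : ℝ, 1 ≤ r →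
    c * (Nat.factorial (⌊r⌋₊ - 1) : ℝ) ≤ Real.Gamma r := by
  obtain ⟨c, hcmem, hc⟩ := (isCompact_Icc (a := (1:ℝ)) (b := 2)).exists_isMinOn
    (Set.nonempty_Icc.2 one_le_two)
    (fun s hs => (Real.differentiableAt_Gamma (fun m => by
      have h1 : (1:ℝ) ≤ s := hs.1
      intro h; rw [h] at h1; nlinarith [Nat.cast_nonneg (α := ℝ) m])).continuousAt.continuousWithinAt)
  refine ⟨Real.Gamma c, Real.Gamma_pos_of_pos (by linarith [hcmem.1]), fun r hr => ?_⟩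
  have hr0 : (0:ℝ) ≤ r := by linarith
  have hfl1 : 1 ≤ ⌊r⌋₊ := Nat.one_le_floor_iff _ |>.2 hr
  set n : ℕ := ⌊r⌋₊ - 1 with hn
  have hcastn : (n : ℝ) = (⌊r⌋₊ : ℝ) - 1 := by
    rw [hn]; push_cast [Nat.cast_sub hfl1]; ring
  set s : ℝ := r - n with hs
  have hfloor_le : (⌊r⌋₊ : ℝ) ≤ r := Nat.floor_le hr0
  have hlt : r < ⌊r⌋₊ + 1 := Nat.lt_floor_add_one r
  have hsmem : s ∈ Set.Icc (1:ℝ) 2 := by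
    constructor <;> [skip; skip] <;> (rw [hs, hcastn]; linarith)
  have := gammaFactMul n hsmem
  have hsn : s + n = r := by rw [hs]; ring
  rw [hsn] at this
  refine le_trans ?_ this
  rw [mul_comm]; exact mul_le_mul_of_nonneg_left (hc hsmem) (by positivity)

lemma summableML {α β x : ℝ} (hα : 0 < α) (hβ : 0 < β) (hx : 0 ≤ x) :
    Summable (fun j : ℕ => x ^ j / Real.Gamma (α * j + β)) := by
  obtain ⟨c, hc, hlb⟩ := gammaLB
  set ρ : ℝ := max 1 ((2*x+1) ^ (1/α)) with hρ
  have hρ1 : (1:ℝ) ≤ ρ := le_max_left _ _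
  have hρ0 : (0:ℝ) < ρ := lt_of_lt_of_le one_pos hρ1
  have hρα : 2*x+1 ≤ ρ ^ α := by
    have h1 : ((2*x+1) ^ (1/α)) ^ α ≤ ρ ^ α :=
      Real.rpow_le_rpow (Real.rpow_nonneg (by linarith) _) (le_max_right _ _) hα.le
    rwa [← Real.rpow_mul (by linarith), one_div, inv_mul_cancel₀ hα.ne', Real.rpow_one] at h1
  have hραpos : (0:ℝ) < ρ ^ α := Real.rpow_pos_of_pos hρ0 _
  have hhalf : x / ρ ^ α ≤ 1/2 := by
    rw [div_le_iff₀ hραpos]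
    nlinarith
  have hxρ : 0 ≤ x / ρ ^ α := div_nonneg hx hραpos.le
  apply Summable.of_norm_bounded_eventually
    (g := fun j => (Real.exp ρ * ρ ^ (2 - β) / c) * (1/2 : ℝ) ^ j)
    ((summable_geometric_of_lt_one (by norm_num) (by norm_num)).mul_left _)
  rw [Nat.cofinite_eq_atTop]
  filter_upwards [Filter.eventually_ge_atTop ⌈1/α⌉₊] with j hj
  -- 1 ≤ α * j + β
  have hj1 : (1:ℝ) ≤ α * j + β := by
    have h1 : (1/α : ℝ) ≤ (⌈1/α⌉₊ : ℕ) := Nat.le_ceil _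
    have h2 : ((⌈1/α⌉₊ : ℕ) : ℝ) ≤ j := Nat.cast_le.2 hj
    have : (1:ℝ) ≤ α * j := by
      rw [← div_le_iff₀' hα] at *; linarith
    linarith
  set r : ℝ := α * j + β with hr
  set n : ℕ := ⌊r⌋₊ - 1 with hn
  have hΓ1 : c * (Nat.factorial n : ℝ) ≤ Real.Gamma r := hlb r hj1
  -- n ≥ r - 2
  have hfl1 : 1 ≤ ⌊r⌋₊ := (Nat.one_le_floor_iff _).2 hj1
  have hcastn : (n : ℝ) = (⌊r⌋₊ : ℝ) - 1 := by
    rw [hn]; push_cast [Nat.cast_sub hfl1]; ring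
  have hnr : r - 2 ≤ (n:ℝ) := by
    have := Nat.lt_floor_add_one r
    rw [hcastn]; linarith
  -- factorial lower bound
  have hfact : ρ ^ (α * j) * ρ ^ (β - 2) / Real.exp ρ ≤ (Nat.factorial n : ℝ) := by
    have h1 : ρ ^ (n:ℕ) / (Nat.factorial n : ℝ) ≤ Real.exp ρ :=
      Real.pow_div_factorial_le_exp ρ hρ0.le n
    have hfpos : (0:ℝ) < (Nat.factorial n : ℝ) := by positivity
    rw [div_le_iff₀ hfpos] at h1
    rw [div_le_iff₀ (Real.exp_pos ρ)]
    calc ρ ^ (α * (j:ℝ)) * ρ ^ (β - 2) = ρ ^ (α * (j:ℝ) + (β - 2)) := (Real.rpow_add hρ0 _ _).symm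
      _ ≤ ρ ^ ((n:ℕ):ℝ) := Real.rpow_le_rpow_of_exponent_le hρ1 (by push_cast; linarith)
      _ = ρ ^ (n:ℕ) := Real.rpow_natCast ρ n
      _ ≤ Real.exp ρ * (Nat.factorial n : ℝ) := h1
      _ = (Nat.factorial n : ℝ) * Real.exp ρ := mul_comm _ _
  have hΓ2 : c * (ρ ^ (α * j) * ρ ^ (β - 2) / Real.exp ρ) ≤ Real.Gamma r :=
    le_trans (mul_le_mul_of_nonneg_left hfact hc.le) hΓ1
  have hΓpos : (0:ℝ) < Real.Gamma r := Real.Gamma_pos_of_pos (by linarith)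
  have hlb2 : (0:ℝ) < c * (ρ ^ (α * j) * ρ ^ (β - 2) / Real.exp ρ) := by positivity
  rw [Real.norm_eq_abs, abs_div, abs_of_nonneg (pow_nonneg hx j), abs_of_pos hΓpos]
  calc x ^ j / Real.Gamma r
      ≤ x ^ j / (c * (ρ ^ (α * j) * ρ ^ (β - 2) / Real.exp ρ)) :=
        div_le_div_of_nonneg_left (by positivity) hlb2 hΓ2
    _ = (Real.exp ρ * ρ ^ (2 - β) / c) * (x / ρ ^ α) ^ j := by
        rw [div_pow, ← Real.rpow_natCast (ρ ^ α) j, ← Real.rpow_mul hρ0.le,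
          show (2 - β : ℝ) = -(β - 2) by ring, Real.rpow_neg hρ0.le]
        have h1 : Real.exp ρ ≠ 0 := (Real.exp_pos ρ).ne'
        have h2 : (ρ ^ (β-2))⁻¹ ≠ 0 := by positivity
        have h3 : ρ ^ (α * (j:ℝ)) ≠ 0 := (Real.rpow_pos_of_pos hρ0 _).ne'
        field_simp
    _ ≤ (Real.exp ρ * ρ ^ (2 - β) / c) * (1/2 : ℝ) ^ j := by
        apply mul_le_mul_of_nonneg_left (pow_le_pow_left₀ hxρ hhalf j) (by positivity)

lemma betaUnit {p q : ℝ} (hp : 0 < p) (hq : 0 < q) :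
    IntegrableOn (fun x : ℝ => x ^ (p-1) * (1-x) ^ (q-1)) (Set.Ioc 0 1) volume ∧
    ∫ x in Set.Ioc (0:ℝ) 1, x ^ (p-1) * (1-x) ^ (q-1)
      = Real.Gamma p * Real.Gamma q / Real.Gamma (p+q) := by
  set F : ℝ → ℂ := fun x => (x:ℂ) ^ ((p:ℂ)-1) * (1-(x:ℂ)) ^ ((q:ℂ)-1) with hF
  have hFint : IntervalIntegrable F volume 0 1 :=
    Complex.betaIntegral_convergent (by simpa using hp) (by simpa using hq)
  have hFint' : IntegrableOn F (Set.Ioc 0 1) volume :=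
    (intervalIntegrable_iff_integrableOn_Ioc_of_le zero_le_one).mp hFint
  have heq : ∀ x ∈ Set.Ioc (0:ℝ) 1, ((x ^ (p-1) * (1-x) ^ (q-1) : ℝ) : ℂ) = F x := by
    intro x hx
    simp only [hF, Complex.ofReal_mul]
    rw [Complex.ofReal_cpow hx.1.le, Complex.ofReal_cpow (by linarith [hx.2] : (0:ℝ) ≤ 1 - x)]
    push_cast
    ring
  have hint : IntegrableOn (fun x : ℝ => x ^ (p-1) * (1-x) ^ (q-1)) (Set.Ioc 0 1) volume := by
    have h1 : IntegrableOn (fun x : ℝ => (F x).re) (Set.Ioc 0 1) volume := hFint'.re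
    apply h1.congr_fun _ measurableSet_Ioc
    intro x hx
    simp only [← heq x hx, Complex.ofReal_re]
  refine ⟨hint, ?_⟩
  have hval : ∫ x in Set.Ioc (0:ℝ) 1, F x
      = ((∫ x in Set.Ioc (0:ℝ) 1, x ^ (p-1) * (1-x) ^ (q-1) : ℝ) : ℂ) :=
    calc ∫ x in Set.Ioc (0:ℝ) 1, F x
        = ∫ x in Set.Ioc (0:ℝ) 1, ((x ^ (p-1) * (1-x) ^ (q-1) : ℝ) : ℂ) :=
          setIntegral_congr_fun measurableSet_Ioc fun x hx => (heq x hx).symm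
      _ = _ := integral_ofReal
  have hbeta : ∫ x in Set.Ioc (0:ℝ) 1, F x = Complex.betaIntegral p q := by
    rw [Complex.betaIntegral, intervalIntegral.integral_of_le zero_le_one]
  have hΓsum : Complex.Gamma ((p:ℂ)+(q:ℂ)) ≠ 0 := by
    rw [show ((p:ℂ)+q) = ((p+q:ℝ):ℂ) by push_cast; ring, Complex.Gamma_ofReal]
    exact_mod_cast (Real.Gamma_pos_of_pos (by linarith)).ne'
  have hGG := Complex.Gamma_mul_Gamma_eq_betaIntegral
    (s := (p:ℂ)) (t := (q:ℂ)) (by simpa using hp) (by simpa using hq)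
  have hb2 : Complex.betaIntegral p q
      = Complex.Gamma p * Complex.Gamma q / Complex.Gamma ((p:ℂ)+(q:ℂ)) := by
    field_simp at hGG ⊢
    linear_combination -hGG
  rw [hb2] at hbeta
  rw [hval] at hbeta
  have hfin : ((∫ x in Set.Ioc (0:ℝ) 1, x ^ (p-1) * (1-x) ^ (q-1) : ℝ) : ℂ)
      = ((Real.Gamma p * Real.Gamma q / Real.Gamma (p+q) : ℝ) : ℂ) := by
    rw [hbeta]
    push_cast [← Complex.Gamma_ofReal]
    norm_num
  exact_mod_cast hfin

lemma betaIoo {α : ℝ} (hα0 : 0 < α) (hα1 : α < 1) {p t : ℝ} (hp : 0 < p) (ht : 0 < t) :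
    IntegrableOn (fun s : ℝ => (t - s) ^ (-α) * s ^ (p-1)) (Set.Ioo 0 t) volume ∧
    ∫ s in Set.Ioo (0:ℝ) t, (t - s) ^ (-α) * s ^ (p-1)
      = Real.Gamma p * Real.Gamma (1-α) / Real.Gamma (p + (1-α)) * t ^ (p - α) := by
  have hq : (0:ℝ) < 1 - α := by linarith
  obtain ⟨hgint, hgval⟩ := betaUnit hp hq
  rw [show (1-α) - 1 = -α by ring] at hgint hgval
  set g : ℝ → ℝ := fun x => x ^ (p-1) * (1-x) ^ (-α) with hg
  -- interval integrability of g on [0,1]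
  have hgI : IntervalIntegrable g volume 0 1 :=
    (intervalIntegrable_iff_integrableOn_Ioc_of_le zero_le_one).mpr hgint
  have hcomp : IntervalIntegrable (fun s => g (t⁻¹ * s)) volume 0 t := by
    have := hgI.comp_mul_left (c := t⁻¹)
    simpa [ht.ne'] using this
  have hcompIoo : IntegrableOn (fun s => g (t⁻¹ * s)) (Set.Ioo 0 t) volume :=
    (intervalIntegrable_iff_integrableOn_Ioo_of_le ht.le).mp hcomp
  set C : ℝ := t ^ (p-1) * t ^ (-α) with hC
  have heq : ∀ s ∈ Set.Ioo (0:ℝ) t, (t - s) ^ (-α) * s ^ (p-1) = C * g (t⁻¹ * s) := by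
    intro s hs
    have hs0 : 0 < s := hs.1
    have hst : s < t := hs.2
    have h1 : t⁻¹ * s = s / t := by ring
    have h2 : 1 - s / t = (t - s) / t := by field_simp
    have hgst : g (s/t) = (s/t) ^ (p-1) * (1 - s/t) ^ (-α) := rfl
    rw [h1, hgst, h2]
    rw [Real.div_rpow hs0.le ht.le, Real.div_rpow (by linarith) ht.le]
    have e1 : t ^ (p-1) ≠ 0 := (Real.rpow_pos_of_pos ht _).ne'
    have e2 : t ^ (-α:ℝ) ≠ 0 := (Real.rpow_pos_of_pos ht _).ne'
    field_simp [hC]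
    ring
  constructor
  · exact IntegrableOn.congr_fun (hcompIoo.const_mul C)
      (fun s hs => (heq s hs).symm) measurableSet_Ioo
  · rw [setIntegral_congr_fun measurableSet_Ioo heq, integral_const_mul]
    have hIoo : ∫ s in Set.Ioo (0:ℝ) t, g (t⁻¹ * s)
        = ∫ s in (0:ℝ)..t, g (t⁻¹ * s) := by
      rw [intervalIntegral.integral_of_le ht.le, integral_Ioc_eq_integral_Ioo]
    have hsub : ∫ s in (0:ℝ)..t, g (t⁻¹ * s) = t * ∫ x in (0:ℝ)..1, g x := by
      have := intervalIntegral.integral_comp_mul_left g (inv_ne_zero ht.ne')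
        (a := 0) (b := t)
      rw [this]
      simp [ht.ne', smul_eq_mul]
    have hunit : ∫ x in (0:ℝ)..1, g x = Real.Gamma p * Real.Gamma (1-α) / Real.Gamma (p + (1-α)) := by
      rw [intervalIntegral.integral_of_le zero_le_one, hgval]
    rw [hIoo, hsub, hunit, hC]
    rw [show t ^ (p-1) * t ^ (-α:ℝ) * (t * (Real.Gamma p * Real.Gamma (1-α) / Real.Gamma (p + (1-α))))
        = (Real.Gamma p * Real.Gamma (1-α) / Real.Gamma (p + (1-α))) * (t ^ (p-1) * t ^ (-α:ℝ) * t) by ring]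
    congr 1
    calc t ^ (p-1) * t ^ (-α:ℝ) * t = t ^ ((p-1) + -α) * t ^ (1:ℝ) := by
          rw [Real.rpow_add ht, Real.rpow_one]
      _ = t ^ ((p-1) + -α + 1) := (Real.rpow_add ht _ _).symm
      _ = t ^ (p-α) := by ring_nf

/-- For `α ∈ (0,1)` and `μ ≥ 0`, the function `y(t) = E_{α,1}(−μ t^α)` satisfies `y(0) = 1`,
is differentiable on `(0,∞)`, the Caputo kernel `s ↦ (t−s)^{−α} y′(s)` is integrable on
`(0,t)` for each `t > 0`, and the Caputo fractional derivative satisfies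
`∂_t^α y(t) = (1/Γ(1−α)) ∫_0^t (t−s)^{−α} y′(s) ds = −μ E_{α,1}(−μ t^α)`. -/
theorem mittagLeffler_caputo_eigen (α μ : ℝ) (hα0 : 0 < α) (hα1 : α < 1) (hμ : 0 ≤ μ)
    (y : ℝ → ℝ) (hy : ∀ t : ℝ, y t = mittagLefflerReal α 1 (-μ * t ^ α)) :
    y 0 = 1 ∧
    (∀ t ∈ Set.Ioi (0 : ℝ), DifferentiableAt ℝ y t) ∧
    (∀ t : ℝ, 0 < t →
      IntegrableOn (fun s : ℝ => (t - s) ^ (-α) * deriv y s) (Set.Ioo 0 t) ∧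
      (1 / Real.Gamma (1 - α)) * ∫ s in Set.Ioo (0 : ℝ) t, (t - s) ^ (-α) * deriv y s =
        -μ * mittagLefflerReal α 1 (-μ * t ^ α)) := by
  set g : ℕ → ℝ → ℝ := fun j s => (-μ)^j / Real.Gamma (α*(j:ℝ)+1) * s ^ (α*(j:ℝ)) with hgdef
  set g' : ℕ → ℝ → ℝ :=
    fun j s => (-μ)^j / Real.Gamma (α*(j:ℝ)+1) * (α*(j:ℝ) * s ^ (α*(j:ℝ)-1)) with hg'def
  -- `y` as a series of rpow functions
  have hyg : ∀ s : ℝ, 0 ≤ s → y s = ∑' j, g j s := by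
    intro s hs
    rw [hy s, mittagLefflerReal]
    refine tsum_congr fun j => ?_
    rw [mul_pow, ← Real.rpow_natCast (s ^ α) j, ← Real.rpow_mul hs]
    rw [show (j:ℝ) * α = α * (j:ℝ) by ring]
    ring
  -- norm of g'
  have habs : ∀ j : ℕ, |(-μ)^j| = μ ^ j := by
    intro j; rw [abs_pow, abs_neg, abs_of_nonneg hμ]
  have hΓpos : ∀ {r : ℝ}, 0 < r → 0 < Real.Gamma r := fun h => Real.Gamma_pos_of_pos h
  -- simplified form of g' (j+1)
  have hg'simp : ∀ (k : ℕ) (s : ℝ),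
      g' (k+1) s = (-μ)^(k+1) / Real.Gamma (α*(k:ℝ)+α) * s ^ (α*(k:ℝ)+α-1) := by
    intro k s
    have hne : α*(k:ℝ)+α ≠ 0 := by positivity
    have hΓ : Real.Gamma (α*((k:ℕ)+1:ℕ)+1) = (α*(k:ℝ)+α) * Real.Gamma (α*(k:ℝ)+α) := by
      rw [show (α*(((k:ℕ)+1:ℕ)):ℝ)+1 = (α*(k:ℝ)+α) + 1 by push_cast; ring]
      exact Real.Gamma_add_one hne
    have hΓne : Real.Gamma (α*(k:ℝ)+α) ≠ 0 := (hΓpos (by positivity)).ne'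
    simp only [hg'def]
    push_cast
    rw [show (α*((k:ℝ)+1)) = α*(k:ℝ)+α by ring] at *
    rw [show Real.Gamma ((α*(k:ℝ)+α) + 1) = (α*(k:ℝ)+α) * Real.Gamma (α*(k:ℝ)+α) from
      Real.Gamma_add_one hne]
    field_simp
  -- derivative of y via term-by-term differentiation
  have hDeriv : ∀ s : ℝ, 0 < s →
      HasDerivAt y (∑' j, g' j s) s ∧ Summable (fun j => g' j s) := by
    intro s hs
    set M : ℝ := s + 1 with hM
    have hM0 : 0 < M := by linarith
    set T : Set ℝ := Set.Ioo (s/2) (s+1) with hT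
    have hsT : s ∈ T := ⟨by linarith, by linarith⟩
    set u : ℕ → ℝ :=
      fun j => (2/s) * (α*(j:ℝ) * ((μ * M^α)^j / Real.Gamma (α*(j:ℝ)+1))) with hu
    have hzM : 0 ≤ μ * M^α := by positivity
    have husum : Summable u := by
      apply Summable.mul_left
      apply (summable_nat_add_iff 1).mp
      have base : Summable (fun n : ℕ => (μ*M^α) * ((μ*M^α) ^ n / Real.Gamma (α * n + α))) :=
        (summableML hα0 hα0 hzM).mul_left _
      apply base.congr
      intro n
      have hne : α*(n:ℝ)+α ≠ 0 := by positivity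
      have hΓ : Real.Gamma (α*((n:ℕ)+1:ℕ)+1) = (α*(n:ℝ)+α) * Real.Gamma (α*(n:ℝ)+α) := by
        rw [show (α*(((n:ℕ)+1:ℕ)):ℝ)+1 = (α*(n:ℝ)+α) + 1 by push_cast; ring]
        exact Real.Gamma_add_one hne
      have hΓne : Real.Gamma (α*(n:ℝ)+α) ≠ 0 := (hΓpos (by positivity)).ne'
      rw [hΓ]
      push_cast
      rw [pow_succ]
      field_simp
    have hbound : ∀ (j : ℕ), ∀ x ∈ T, ‖g' j x‖ ≤ u j := by
      intro j x hx
      have hx0 : 0 < x := lt_trans (by linarith) hx.1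
      have hxM : x ≤ M := le_of_lt hx.2
      have h1 : ‖g' j x‖ = μ^j / Real.Gamma (α*(j:ℝ)+1) * (α*(j:ℝ) * x ^ (α*(j:ℝ)-1)) := by
        simp only [hg'def, Real.norm_eq_abs]
        rw [abs_mul, abs_div, habs j, abs_of_pos (hΓpos (by positivity)),
          abs_of_nonneg (by positivity)]
      rw [h1]
      simp only [hu]
      have hxpow : x ^ (α*(j:ℝ)-1) ≤ M^(α*(j:ℝ)) * (2/s) := by
        rw [Real.rpow_sub hx0, Real.rpow_one, div_le_iff₀ hx0]
        have h2 : x ^ (α*(j:ℝ)) ≤ M ^ (α*(j:ℝ)) :=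
          Real.rpow_le_rpow hx0.le hxM (by positivity)
        have h3 : (2/s) * x ≥ 1 := by
          rw [ge_iff_le, ← div_le_iff₀' (by positivity : (0:ℝ) < 2/s)]
          rw [div_div_eq_mul_div]; linarith [hx.1]
        nlinarith [Real.rpow_nonneg hx0.le (α*(j:ℝ)), Real.rpow_nonneg hM0.le (α*(j:ℝ))]
      have hMpow : (μ * M^α)^j = μ^j * M^(α*(j:ℝ)) := by
        rw [mul_pow, ← Real.rpow_natCast (M^α) j, ← Real.rpow_mul hM0.le]
      rw [hMpow]
      have e1 : 0 ≤ μ^j / Real.Gamma (α*(j:ℝ)+1) := by positivity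
      calc μ^j / Real.Gamma (α*(j:ℝ)+1) * (α*(j:ℝ) * x ^ (α*(j:ℝ)-1))
          ≤ μ^j / Real.Gamma (α*(j:ℝ)+1) * (α*(j:ℝ) * (M^(α*(j:ℝ)) * (2/s))) := by
            apply mul_le_mul_of_nonneg_left _ e1
            exact mul_le_mul_of_nonneg_left hxpow (by positivity)
        _ = 2 / s * (α * (j:ℝ) * (μ ^ j * M ^ (α * (j:ℝ)) / Real.Gamma (α * (j:ℝ) + 1))) := by
            ring
    have hg0 : Summable fun j => g j s := by
      apply Summable.of_norm_bounded (summableML hα0 one_pos (by positivity : (0:ℝ) ≤ μ * s^α))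
      intro j
      rw [hgdef]
      have : |(-μ)^j / Real.Gamma (α*(j:ℝ)+1) * s ^ (α*(j:ℝ))|
          = μ^j * s^(α*(j:ℝ)) / Real.Gamma (α*(j:ℝ)+1) := by
        rw [abs_mul, abs_div, habs j, abs_of_pos (hΓpos (by positivity)),
          abs_of_nonneg (Real.rpow_nonneg hs.le _)]
        ring
      rw [Real.norm_eq_abs, this]
      apply le_of_eq
      rw [mul_pow, ← Real.rpow_natCast (s^α) j, ← Real.rpow_mul hs.le]
    have hgderiv : ∀ (n : ℕ), ∀ x ∈ T, HasDerivAt (g n) (g' n x) x := by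
      intro n x hx
      have hx0 : 0 < x := lt_trans (by linarith) hx.1
      exact (Real.hasDerivAt_rpow_const (Or.inl hx0.ne')).const_mul _
    have A := hasDerivAt_tsum_of_isPreconnected husum isOpen_Ioo isPreconnected_Ioo
      hgderiv hbound hsT hg0 hsT
    constructor
    · apply A.congr_of_eventuallyEq
      filter_upwards [isOpen_Ioo.mem_nhds hsT] with z hz
      exact hyg z (le_of_lt (lt_trans (by linarith) hz.1))
    · exact Summable.of_norm_bounded husum (fun j => hbound j s hsT)
  have hderiv_eq : ∀ s : ℝ, 0 < s → deriv y s = ∑' j, g' j s :=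
    fun s hs => ((hDeriv s hs).1).deriv
  have hg'zero : ∀ s : ℝ, g' 0 s = 0 := by
    intro s; simp [hg'def]
  refine ⟨?_, ?_, ?_⟩
  · -- y 0 = 1
    rw [hy 0, show -μ * (0:ℝ)^α = 0 by rw [Real.zero_rpow hα0.ne']; ring, mittagLefflerReal]
    rw [tsum_eq_single 0 (fun j hj => by simp [zero_pow hj])]
    norm_num [Real.Gamma_one]
  · exact fun t ht => ((hDeriv t ht).1).differentiableAt
  · intro t ht
    -- series for the kernel-times-derivative
    set h : ℕ → ℝ → ℝ := fun k s =>
      (-μ)^(k+1) / Real.Gamma (α*(k:ℝ)+α) * ((t - s) ^ (-α) * s ^ ((α*(k:ℝ)+α)-1)) with hhdef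
    have hps : ∀ k : ℕ, (0:ℝ) < α*(k:ℝ)+α := fun k => by positivity
    have hderiv_sum : ∀ s ∈ Set.Ioo (0:ℝ) t, deriv y s = ∑' k, g' (k+1) s := by
      intro s hs
      rw [hderiv_eq s hs.1, Summable.tsum_eq_zero_add (hDeriv s hs.1).2, hg'zero, zero_add]
    have hEqOn : ∀ s ∈ Set.Ioo (0:ℝ) t,
        (t - s) ^ (-α) * deriv y s = ∑' k, h k s := by
      intro s hs
      rw [hderiv_sum s hs, ← tsum_mul_left]
      refine tsum_congr fun k => ?_
      rw [hg'simp k s, hhdef]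
      ring
    -- integrability and value of each term
    have hbetak := fun k : ℕ => betaIoo hα0 hα1 (hps k) ht
    have hint_k : ∀ k : ℕ, IntegrableOn (h k) (Set.Ioo 0 t) volume := by
      intro k
      exact ((hbetak k).1).const_mul _
    have hval_k : ∀ k : ℕ, ∫ s in Set.Ioo (0:ℝ) t, h k s
        = (-μ)^(k+1) * Real.Gamma (1-α) * t^(α*(k:ℝ)) / Real.Gamma (α*(k:ℝ)+1) := by
      intro k
      rw [hhdef]
      simp only []
      rw [integral_const_mul, (hbetak k).2]
      have hΓne1 : Real.Gamma (α*(k:ℝ)+α) ≠ 0 := (hΓpos (hps k)).ne'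
      have hΓne2 : Real.Gamma (α*(k:ℝ)+1) ≠ 0 := (hΓpos (by positivity)).ne'
      rw [show (α*(k:ℝ)+α) + (1-α) = α*(k:ℝ)+1 by ring,
        show (α*(k:ℝ)+α) - α = α*(k:ℝ) by ring]
      field_simp
    have hnormval_k : ∀ k : ℕ, ∫ s in Set.Ioo (0:ℝ) t, ‖h k s‖
        = μ^(k+1) * Real.Gamma (1-α) * t^(α*(k:ℝ)) / Real.Gamma (α*(k:ℝ)+1) := by
      intro k
      have : ∀ s ∈ Set.Ioo (0:ℝ) t, ‖h k s‖
          = μ^(k+1) / Real.Gamma (α*(k:ℝ)+α) * ((t - s) ^ (-α) * s ^ ((α*(k:ℝ)+α)-1)) := by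
        intro s hs
        rw [hhdef]
        simp only []
        rw [Real.norm_eq_abs, abs_mul, abs_div, habs (k+1), abs_of_pos (hΓpos (hps k)),
          abs_of_nonneg (mul_nonneg (Real.rpow_nonneg (by linarith [hs.2]) _)
            (Real.rpow_nonneg hs.1.le _))]
      rw [setIntegral_congr_fun measurableSet_Ioo this, integral_const_mul, (hbetak k).2]
      have hΓne1 : Real.Gamma (α*(k:ℝ)+α) ≠ 0 := (hΓpos (hps k)).ne'
      have hΓne2 : Real.Gamma (α*(k:ℝ)+1) ≠ 0 := (hΓpos (by positivity)).ne'
      rw [show (α*(k:ℝ)+α) + (1-α) = α*(k:ℝ)+1 by ring,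
        show (α*(k:ℝ)+α) - α = α*(k:ℝ) by ring]
      field_simp
    have htpow : ∀ k : ℕ, (μ * t^α)^k = μ^k * t^(α*(k:ℝ)) := by
      intro k
      rw [mul_pow, ← Real.rpow_natCast (t^α) k, ← Real.rpow_mul ht.le]
    have hsum_norm : Summable (fun k => ∫ s in Set.Ioo (0:ℝ) t, ‖h k s‖) := by
      have base : Summable (fun k : ℕ =>
          (μ * Real.Gamma (1-α)) * ((μ*t^α)^k / Real.Gamma (α*(k:ℝ)+1))) :=
        (summableML hα0 one_pos (by positivity)).mul_left _
      apply base.congr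
      intro k
      rw [hnormval_k k, htpow k, pow_succ]
      ring
    -- the integrability conjunct
    have hmeas : AEStronglyMeasurable (fun s : ℝ => (t - s) ^ (-α) * deriv y s)
        (volume.restrict (Set.Ioo 0 t)) := by
      apply Measurable.aestronglyMeasurable
      exact ((measurable_const.sub measurable_id).pow_const _).mul (measurable_deriv y)
    set K : ℝ := ∑' k : ℕ, μ^(k+1) * t^(α*(k:ℝ)) / Real.Gamma (α*(k:ℝ)+α) with hK
    have hKsum : Summable (fun k : ℕ => μ^(k+1) * t^(α*(k:ℝ)) / Real.Gamma (α*(k:ℝ)+α)) := by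
      have base : Summable (fun k : ℕ => μ * ((μ*t^α)^k / Real.Gamma (α*(k:ℝ)+α))) :=
        (summableML hα0 hα0 (by positivity)).mul_left _
      apply base.congr
      intro k
      rw [htpow k, pow_succ]
      ring
    have hptbound : ∀ s ∈ Set.Ioo (0:ℝ) t,
        ‖(t - s) ^ (-α) * deriv y s‖ ≤ K * ((t - s) ^ (-α) * s ^ (α - 1)) := by
      intro s hs
      have hs0 : 0 < s := hs.1
      have hts : 0 < t - s := by linarith [hs.2]
      have hsum1 : Summable (fun k => |g' (k+1) s|) :=
        (summable_nat_add_iff (f := fun j => |g' j s|) 1).mpr ((hDeriv s hs0).2.abs)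
      have hsum2 : Summable (fun k : ℕ =>
          (μ^(k+1) * t^(α*(k:ℝ)) / Real.Gamma (α*(k:ℝ)+α)) * s^(α-1)) := hKsum.mul_right _
      have hterm : ∀ k : ℕ, |g' (k+1) s|
          ≤ (μ^(k+1) * t^(α*(k:ℝ)) / Real.Gamma (α*(k:ℝ)+α)) * s^(α-1) := by
        intro k
        rw [hg'simp k s, abs_mul, abs_div, habs (k+1),
          abs_of_pos (hΓpos (hps k)), abs_of_nonneg (Real.rpow_nonneg hs0.le _)]
        rw [show (α*(k:ℝ)+α)-1 = (α*(k:ℝ)) + (α-1) by ring, Real.rpow_add hs0]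
        have h2 : s ^ (α*(k:ℝ)) ≤ t ^ (α*(k:ℝ)) :=
          Real.rpow_le_rpow hs0.le (le_of_lt hs.2) (by positivity)
        have h3 : 0 ≤ s ^ (α-1) := Real.rpow_nonneg hs0.le _
        have h4 : 0 ≤ μ^(k+1) / Real.Gamma (α*(k:ℝ)+α) := by positivity
        calc μ^(k+1) / Real.Gamma (α*(k:ℝ)+α) * (s ^ (α*(k:ℝ)) * s^(α-1))
            ≤ μ^(k+1) / Real.Gamma (α*(k:ℝ)+α) * (t ^ (α*(k:ℝ)) * s^(α-1)) := by
              apply mul_le_mul_of_nonneg_left _ h4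
              exact mul_le_mul_of_nonneg_right h2 h3
          _ = (μ^(k+1) * t^(α*(k:ℝ)) / Real.Gamma (α*(k:ℝ)+α)) * s^(α-1) := by ring
      have hnorm : |deriv y s| ≤ K * s^(α-1) := by
        rw [hderiv_sum s hs]
        calc |∑' k, g' (k+1) s| ≤ ∑' k, |g' (k+1) s| := by
              simpa [Real.norm_eq_abs] using
                norm_tsum_le_tsum_norm (f := fun k => g' (k+1) s)
                  (by simpa [Real.norm_eq_abs] using hsum1)
          _ ≤ ∑' k : ℕ, (μ^(k+1) * t^(α*(k:ℝ)) / Real.Gamma (α*(k:ℝ)+α)) * s^(α-1) :=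
              Summable.tsum_le_tsum hterm hsum1 hsum2
          _ = K * s^(α-1) := by rw [tsum_mul_right]
      rw [Real.norm_eq_abs, abs_mul, abs_of_nonneg (Real.rpow_nonneg hts.le _)]
      calc (t-s)^(-α) * |deriv y s| ≤ (t-s)^(-α) * (K * s^(α-1)) := by
            apply mul_le_mul_of_nonneg_left _ (Real.rpow_nonneg hts.le _)
            exact hnorm
        _ = K * ((t-s)^(-α) * s^(α-1)) := by ring
    have hmaj : IntegrableOn (fun s : ℝ => K * ((t - s) ^ (-α) * s ^ (α - 1)))
        (Set.Ioo 0 t) volume := by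
      exact ((betaIoo hα0 hα1 hα0 ht).1).const_mul K
    have hintegrable : IntegrableOn (fun s : ℝ => (t - s) ^ (-α) * deriv y s)
        (Set.Ioo 0 t) := by
      apply Integrable.mono' hmaj hmeas
      rw [ae_restrict_iff' measurableSet_Ioo]
      exact ae_of_all _ hptbound
    refine ⟨hintegrable, ?_⟩
    -- the value
    have hswap : ∫ s in Set.Ioo (0:ℝ) t, (t - s) ^ (-α) * deriv y s
        = ∑' k, ∫ s in Set.Ioo (0:ℝ) t, h k s := by
      rw [setIntegral_congr_fun measurableSet_Ioo hEqOn]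
      exact (integral_tsum_of_summable_integral_norm hint_k hsum_norm).symm
    rw [hswap]
    have hterm2 : ∀ k : ℕ, ∫ s in Set.Ioo (0:ℝ) t, h k s
        = ((-μ) * Real.Gamma (1-α)) * ((-μ*t^α)^k / Real.Gamma ((k:ℝ)*α+1)) := by
      intro k
      rw [hval_k k]
      have : (-μ*t^α)^k = (-μ)^k * t^(α*(k:ℝ)) := by
        rw [mul_pow, ← Real.rpow_natCast (t^α) k, ← Real.rpow_mul ht.le]
      rw [this, show ((k:ℝ)*α+1) = α*(k:ℝ)+1 by ring, pow_succ]
      ring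
    rw [tsum_congr hterm2, tsum_mul_left]
    rw [mittagLefflerReal]
    have hΓne : Real.Gamma (1-α) ≠ 0 := (hΓpos (by linarith)).ne'
    field_simp
end

section
/- Let α ∈ (0,1), T > 0, and let v : [0,T] → ℝ be continuously differentiable; set v₁(s) = s v(s), so v₁′(s) = v(s) + s v′(s). Then for every t ∈ (0,T] one has t (I^α v′)(t) = (I^α v₁′)(t) + (α−1) (I^α v)(t) − t κ_α(t) v(0), where κ_α(t) = t^{α−1}/Γ(α). -/
open Real MeasureTheory

/-- The Riemann–Liouville fractional integral
`(I^β v)(t) = ∫_0^t (t−s)^{β−1}/Γ(β) · v(s) ds`. -/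
noncomputable def fracInt (β : ℝ) (v : ℝ → ℝ) (t : ℝ) : ℝ :=
  ∫ s in Set.Ioo (0 : ℝ) t, (t - s) ^ (β - 1) / Real.Gamma β * v s

private lemma cont_rpow_shift (t p : ℝ) (hp : 0 ≤ p) :
    Continuous fun s : ℝ => (t - s) ^ p := by
  have h : Continuous fun x : ℝ => x ^ p := by
    rw [continuous_iff_continuousAt]
    intro x
    exact Real.continuousAt_rpow_const x p (Or.inr hp)
  exact h.comp (continuous_const.sub continuous_id)

private lemma intint_rpow (α t : ℝ) (hα : -1 < α - 1) :
    IntervalIntegrable (fun s => (t - s) ^ (α - 1)) volume 0 t := by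
  have h := (intervalIntegral.intervalIntegrable_rpow' (a := 0) (b := t) hα).comp_sub_left t
  simpa using h.symm

private lemma key (α t : ℝ) (hα0 : 0 < α) (hα1 : α < 1) (ht : 0 < t)
    (v v' : ℝ → ℝ) (hd : ∀ s ∈ Set.Icc (0:ℝ) t, HasDerivAt v (v' s) s)
    (hv' : ContinuousOn v' (Set.Icc 0 t)) :
    ∫ s in (0:ℝ)..t, (t - s) ^ α * v' s
      = α * (∫ s in (0:ℝ)..t, (t - s) ^ (α - 1) * v s) - t ^ α * v 0 := by
  have hvc : ContinuousOn v (Set.Icc 0 t) := fun s hs =>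
    (hd s hs).continuousAt.continuousWithinAt
  have huIcc : Set.uIcc (0:ℝ) t = Set.Icc 0 t := Set.uIcc_of_le ht.le
  have hcontα : Continuous fun s : ℝ => (t - s) ^ α := cont_rpow_shift t α hα0.le
  -- integrabilities
  have hInt1 : IntervalIntegrable (fun s => (t - s) ^ (α - 1) * v s) volume 0 t := by
    apply (intint_rpow α t (by linarith)).mul_continuousOn
    rwa [huIcc]
  have hInt2 : IntervalIntegrable (fun s => (t - s) ^ α * v' s) volume 0 t := by
    apply ContinuousOn.intervalIntegrable
    rw [huIcc]
    exact (hcontα.continuousOn).mul hv'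
  have hIntF' : IntervalIntegrable
      (fun s => (t - s) ^ α * v' s - α * ((t - s) ^ (α - 1) * v s)) volume 0 t :=
    hInt2.sub (hInt1.const_mul α)
  -- FTC
  have hFTC : ∫ s in (0:ℝ)..t,
      ((t - s) ^ α * v' s - α * ((t - s) ^ (α - 1) * v s))
      = (t - t) ^ α * v t - (t - 0) ^ α * v 0 := by
    apply intervalIntegral.integral_eq_sub_of_hasDeriv_right_of_le
      (f := fun s => (t - s) ^ α * v s)
      (f' := fun s => (t - s) ^ α * v' s - α * ((t - s) ^ (α - 1) * v s)) ht.le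
    · exact (hcontα.continuousOn).mul hvc
    · intro s hs
      have hs0 : (0:ℝ) < t - s := by simp only [Set.mem_Ioo] at hs; linarith [hs.2]
      have h1 : HasDerivAt (fun x : ℝ => (t - x) ^ α)
          (-1 * α * (t - s) ^ (α - 1)) s := by
        have hsub : HasDerivAt (fun x : ℝ => t - x) (-1) s :=
          (hasDerivAt_id s).const_sub t |>.congr_deriv rfl
        simpa using hsub.rpow_const (Or.inl hs0.ne')
      have h2 : HasDerivAt v (v' s) s := by
        apply hd
        simp only [Set.mem_Ioo] at hs
        exact ⟨hs.1.le, hs.2.le⟩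
      have := h1.mul h2
      apply HasDerivAt.hasDerivWithinAt
      convert this using 1
      · rfl
      · rfl
      · ring
    · exact hIntF'
  rw [intervalIntegral.integral_sub hInt2 (hInt1.const_mul α),
      intervalIntegral.integral_const_mul] at hFTC
  rw [sub_self, Real.zero_rpow hα0.ne', zero_mul, sub_zero, zero_sub] at hFTC
  linarith [hFTC]

/-- For `α ∈ (0,1)` and `v` continuously differentiable on `[0,T]` (with derivative `v'`),
setting `v₁(s) = s v(s)` so that `v₁′(s) = v(s) + s v′(s)`, one has for all `t ∈ (0,T]`:
`t (I^α v′)(t) = (I^α v₁′)(t) + (α−1)(I^α v)(t) − t·(t^{α−1}/Γ(α))·v(0)`. -/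
theorem fracInt_mul_deriv (α T : ℝ) (hα0 : 0 < α) (hα1 : α < 1) (hT : 0 < T)
    (v v' : ℝ → ℝ) (hderiv : ∀ s ∈ Set.Icc (0 : ℝ) T, HasDerivAt v (v' s) s)
    (hv' : ContinuousOn v' (Set.Icc 0 T)) :
    ∀ t ∈ Set.Ioc (0 : ℝ) T,
      t * fracInt α v' t =
        fracInt α (fun s => v s + s * v' s) t + (α - 1) * fracInt α v t
          - t * (t ^ (α - 1) / Real.Gamma α) * v 0 := by
  intro t ht
  obtain ⟨ht0, htT⟩ := ht
  have hsub : Set.Icc (0:ℝ) t ⊆ Set.Icc 0 T := Set.Icc_subset_Icc le_rfl htT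
  have hd : ∀ s ∈ Set.Icc (0:ℝ) t, HasDerivAt v (v' s) s := fun s hs =>
    hderiv s (hsub hs)
  have hv't : ContinuousOn v' (Set.Icc 0 t) := hv'.mono hsub
  have hvc : ContinuousOn v (Set.Icc 0 t) := fun s hs =>
    (hd s hs).continuousAt.continuousWithinAt
  have huIcc : Set.uIcc (0:ℝ) t = Set.Icc 0 t := Set.uIcc_of_le ht0.le
  have hΓ : 0 < Real.Gamma α := Real.Gamma_pos_of_pos hα0
  -- rewrite fracInt as interval integral
  have hfrac : ∀ w : ℝ → ℝ, fracInt α w t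
      = (Real.Gamma α)⁻¹ * ∫ s in (0:ℝ)..t, (t - s) ^ (α - 1) * w s := by
    intro w
    rw [fracInt, ← intervalIntegral.integral_const_mul,
        intervalIntegral.integral_of_le ht0.le, MeasureTheory.integral_Ioc_eq_integral_Ioo]
    congr 1
    ext s
    rw [div_mul_eq_mul_div, mul_comm, mul_div_assoc]
    ring
  -- integrabilities
  have hIv : IntervalIntegrable (fun s => (t - s) ^ (α - 1) * v s) volume 0 t := by
    apply (intint_rpow α t (by linarith)).mul_continuousOn; rwa [huIcc]
  have hIsv' : IntervalIntegrable (fun s => (t - s) ^ (α - 1) * (s * v' s)) volume 0 t := by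
    apply (intint_rpow α t (by linarith)).mul_continuousOn
    rw [huIcc]
    exact (continuous_id.continuousOn).mul hv't
  -- pointwise identity : t * ((t-s)^(α-1) * v' s) = (t-s)^α * v' s + (t-s)^(α-1) * (s * v' s)
  have hpt : ∀ s, t * ((t - s) ^ (α - 1) * v' s)
      = (t - s) ^ α * v' s + (t - s) ^ (α - 1) * (s * v' s) := by
    intro s
    by_cases hts : t - s = 0
    · have hst : s = t := by linarith [sub_eq_zero.mp hts]
      rw [hts, Real.zero_rpow hα0.ne', Real.zero_rpow (by linarith : α - 1 ≠ 0)]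
      ring
    · have : (t - s) ^ α = (t - s) ^ (α - 1) * (t - s) := by
        have := Real.rpow_add_one hts (α - 1)
        simpa using this
      rw [this]; ring
  have hsplit : (∫ s in (0:ℝ)..t, t * ((t - s) ^ (α - 1) * v' s))
      = (∫ s in (0:ℝ)..t, (t - s) ^ α * v' s)
        + ∫ s in (0:ℝ)..t, (t - s) ^ (α - 1) * (s * v' s) := by
    rw [← intervalIntegral.integral_add _ hIsv']
    · exact intervalIntegral.integral_congr fun s _ => hpt s
    · apply ContinuousOn.intervalIntegrable
      rw [huIcc]
      exact ((cont_rpow_shift t α hα0.le).continuousOn).mul hv't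
  rw [intervalIntegral.integral_const_mul] at hsplit
  have hkey := key α t hα0 hα1 ht0 v v' hd hv't
  have hadd : (∫ s in (0:ℝ)..t, (t - s) ^ (α - 1) * (v s + s * v' s))
      = (∫ s in (0:ℝ)..t, (t - s) ^ (α - 1) * v s)
        + ∫ s in (0:ℝ)..t, (t - s) ^ (α - 1) * (s * v' s) := by
    rw [← intervalIntegral.integral_add hIv hIsv']
    exact intervalIntegral.integral_congr fun s _ => by ring
  have htα : t * t ^ (α - 1) = t ^ α := by
    have := Real.rpow_add_one ht0.ne' (α - 1)
    rw [show α - 1 + 1 = α by ring] at this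
    rw [this]; ring
  rw [hfrac, hfrac, hfrac, hadd]
  rw [hkey, ← htα] at hsplit
  linear_combination (Real.Gamma α)⁻¹ * hsplit
end

section
/- Let α ∈ (0,1), T > 0, and let v : [0,T] → ℝ be continuously differentiable; set v₁(s) = s v(s) and v₂(s) = s² v(s), so v₂′(s) = 2s v(s) + s² v′(s). Then for every t ∈ (0,T] one has t² (I^α v′)(t) = (I^α v₂′)(t) + 2(α−1) (I^α v₁)(t) + α(α−1) (I^{α+1} v)(t) − t² κ_α(t) v(0), where κ_α(t) = t^{α−1}/Γ(α). -/
open Real MeasureTheory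

lemma fracInt_integrable (β t : ℝ) (hβ : 0 < β) (ht : 0 < t) (g : ℝ → ℝ)
    (hg : ContinuousOn g (Set.Icc 0 t)) :
    IntervalIntegrable (fun s => (t - s) ^ (β - 1) / Real.Gamma β * g s) volume 0 t := by
  have h1 : IntervalIntegrable (fun x : ℝ => x ^ (β - 1)) volume (t - 0) (t - t) :=
    intervalIntegral.intervalIntegrable_rpow' (by linarith)
  have h2 : IntervalIntegrable (fun s => (t - s) ^ (β - 1)) volume 0 t := by
    simpa using h1.comp_sub_left t
  have h3 : IntervalIntegrable (fun s => (t - s) ^ (β - 1) / Real.Gamma β) volume 0 t :=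
    h2.div_const _
  have := h3.mul_continuousOn (g := g) (by rwa [Set.uIcc_of_le ht.le])
  exact this

lemma fracInt_eq_intervalIntegral (β t : ℝ) (ht : 0 ≤ t) (w : ℝ → ℝ) :
    fracInt β w t = ∫ s in (0:ℝ)..t, (t - s) ^ (β - 1) / Real.Gamma β * w s := by
  rw [intervalIntegral.integral_of_le ht, MeasureTheory.integral_Ioc_eq_integral_Ioo]
  rfl

/-- For `α ∈ (0,1)` and `v` continuously differentiable on `[0,T]` (with derivative `v'`),
setting `v₁(s) = s v(s)`, `v₂(s) = s² v(s)` so that `v₂′(s) = 2s v(s) + s² v′(s)`, one has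
for all `t ∈ (0,T]`: `t² (I^α v′)(t) = (I^α v₂′)(t) + 2(α−1)(I^α v₁)(t)
+ α(α−1)(I^{α+1} v)(t) − t²·(t^{α−1}/Γ(α))·v(0)`. -/
theorem fracInt_sq_mul_deriv (α T : ℝ) (hα0 : 0 < α) (hα1 : α < 1) (hT : 0 < T)
    (v v' : ℝ → ℝ) (hderiv : ∀ s ∈ Set.Icc (0 : ℝ) T, HasDerivAt v (v' s) s)
    (hv' : ContinuousOn v' (Set.Icc 0 T)) :
    ∀ t ∈ Set.Ioc (0 : ℝ) T,
      t ^ 2 * fracInt α v' t =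
        fracInt α (fun s => 2 * s * v s + s ^ 2 * v' s) t
          + 2 * (α - 1) * fracInt α (fun s => s * v s) t
          + α * (α - 1) * fracInt (α + 1) v t
          - t ^ 2 * (t ^ (α - 1) / Real.Gamma α) * v 0 := by
  rintro t ⟨ht0, htT⟩
  set γ := Real.Gamma α with hγdef
  have hγ : 0 < γ := Real.Gamma_pos_of_pos hα0
  have hIccsub : Set.Icc (0:ℝ) t ⊆ Set.Icc 0 T := Set.Icc_subset_Icc le_rfl htT
  have hvcont : ContinuousOn v (Set.Icc 0 T) := fun s hs =>
    (hderiv s hs).continuousAt.continuousWithinAt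
  -- integrands
  set e₁ : ℝ → ℝ := fun s => (t - s) ^ (α - 1) / γ * v' s with he₁
  set e₂ : ℝ → ℝ := fun s => (t - s) ^ (α - 1) / γ * (2 * s * v s + s ^ 2 * v' s) with he₂
  set e₃ : ℝ → ℝ := fun s => (t - s) ^ (α - 1) / γ * (s * v s) with he₃
  set e₄ : ℝ → ℝ := fun s => (t - s) ^ (α + 1 - 1) / Real.Gamma (α + 1) * v s with he₄
  have hi₁ : IntervalIntegrable e₁ volume 0 t :=
    fracInt_integrable α t hα0 ht0 v' (hv'.mono hIccsub)
  have hi₂ : IntervalIntegrable e₂ volume 0 t := by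
    apply fracInt_integrable α t hα0 ht0
    exact ((continuousOn_const.mul continuousOn_id).mul (hvcont.mono hIccsub)).add
      (((continuousOn_id.pow 2)).mul (hv'.mono hIccsub))
  have hi₃ : IntervalIntegrable e₃ volume 0 t :=
    fracInt_integrable α t hα0 ht0 _ (continuousOn_id.mul (hvcont.mono hIccsub))
  have hi₄ : IntervalIntegrable e₄ volume 0 t :=
    fracInt_integrable (α + 1) t (by linarith) ht0 v (hvcont.mono hIccsub)
  -- the combined integrand and antiderivative
  set φ : ℝ → ℝ := fun s =>
    t ^ 2 * e₁ s - e₂ s - 2 * (α - 1) * e₃ s - α * (α - 1) * e₄ s with hφ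
  set F : ℝ → ℝ := fun s => (t + s) * (t - s) ^ α / γ * v s with hF
  have hφint : IntervalIntegrable φ volume 0 t :=
    (((hi₁.const_mul _).sub hi₂).sub (hi₃.const_mul _)).sub (hi₄.const_mul _)
  have hFcont : ContinuousOn F (Set.Icc 0 t) := by
    apply ContinuousOn.mul _ (hvcont.mono hIccsub)
    apply ContinuousOn.div_const
    exact (continuousOn_const.add continuousOn_id).mul
      ((Real.continuous_rpow_const hα0.le).comp (continuous_const.sub continuous_id)).continuousOn
  have hFderiv : ∀ s ∈ Set.Ioo (0:ℝ) t, HasDerivAt F (φ s) s := by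
    intro s hs
    have hst : (0:ℝ) < t - s := sub_pos.mpr hs.2
    have hsle : s ∈ Set.Icc (0:ℝ) T := ⟨hs.1.le, le_trans hs.2.le htT⟩
    have h1 : HasDerivAt (fun s : ℝ => (t - s) ^ α) (α * (t - s) ^ (α - 1) * (-1)) s := by
      exact (Real.hasDerivAt_rpow_const (Or.inl hst.ne')).comp s
        ((hasDerivAt_id s).const_sub t)
    have h2 : HasDerivAt (fun s : ℝ => t + s) 1 s := (hasDerivAt_id s).const_add t
    have h3 : HasDerivAt (fun s : ℝ => (t + s) * (t - s) ^ α / γ)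
        ((1 * (t - s) ^ α + (t + s) * (α * (t - s) ^ (α - 1) * (-1))) / γ) s :=
      (h2.mul h1).div_const γ
    have h4 : HasDerivAt (fun y => (t + y) * (t - y) ^ α / γ * v y)
        ((1 * (t - s) ^ α + (t + s) * (α * (t - s) ^ (α - 1) * (-1))) / γ * v s
          + (t + s) * (t - s) ^ α / γ * v' s) s := h3.mul (hderiv s hsle)
    convert h4 using 1
    -- algebra
    have hxα : (t - s) ^ α = (t - s) ^ (α - 1) * (t - s) := by
      rw [← Real.rpow_add_one hst.ne' (α - 1), sub_add_cancel]
    have hG1 : Real.Gamma (α + 1) = α * γ := Real.Gamma_add_one hα0.ne'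
    simp only [hφ, he₁, he₂, he₃, he₄, hG1, add_sub_cancel_right, hxα]
    field_simp
    ring
  have key := intervalIntegral.integral_eq_sub_of_hasDerivAt_of_le ht0.le hFcont hFderiv hφint
  have hFt : F t = 0 := by
    simp [hF, Real.zero_rpow hα0.ne']
  have hF0 : F 0 = t ^ 2 * (t ^ (α - 1) / γ) * v 0 := by
    have : t ^ α = t ^ (α - 1) * t := by
      rw [← Real.rpow_add_one ht0.ne' (α - 1), sub_add_cancel]
    simp only [hF, add_zero, sub_zero, this]
    ring
  rw [hFt, hF0, zero_sub] at key
  have hsplit : (∫ s in (0:ℝ)..t, φ s) =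
      t ^ 2 * (∫ s in (0:ℝ)..t, e₁ s) - (∫ s in (0:ℝ)..t, e₂ s)
        - 2 * (α - 1) * (∫ s in (0:ℝ)..t, e₃ s)
        - α * (α - 1) * (∫ s in (0:ℝ)..t, e₄ s) := by
    rw [hφ]
    rw [intervalIntegral.integral_sub (((hi₁.const_mul _).sub hi₂).sub (hi₃.const_mul _))
        (hi₄.const_mul _),
      intervalIntegral.integral_sub ((hi₁.const_mul _).sub hi₂) (hi₃.const_mul _),
      intervalIntegral.integral_sub (hi₁.const_mul _) hi₂,
      intervalIntegral.integral_const_mul, intervalIntegral.integral_const_mul,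
      intervalIntegral.integral_const_mul]
  rw [hsplit] at key
  rw [fracInt_eq_intervalIntegral α t ht0.le, fracInt_eq_intervalIntegral α t ht0.le,
    fracInt_eq_intervalIntegral α t ht0.le, fracInt_eq_intervalIntegral (α + 1) t ht0.le]
  rw [← hγdef]
  linarith [key]
end

section
/- For every α ∈ (0,1) there exists a constant C > 0 (depending only on α) such that for every real Hilbert space H, every T > 0, every continuously differentiable function v : [0,T] → H, and every t ∈ (0,T], one has ‖v(t) − v(0)‖² ≤ C t^α ∫_0^t ‖(I^{(1−α)/2} v′)(s)‖² ds. -/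
open Real MeasureTheory

/-- The Riemann–Liouville fractional integral of an `H`-valued function,
`(I^β v)(t) = ∫_0^t (t−s)^{β−1}/Γ(β) • v(s) ds` (a Bochner integral). -/
noncomputable def fracIntH (H : Type) [NormedAddCommGroup H] [NormedSpace ℝ H]
    (β : ℝ) (v : ℝ → H) (t : ℝ) : H :=
  ∫ s in Set.Ioo (0 : ℝ) t, ((t - s) ^ (β - 1) / Real.Gamma β) • v s

open Set

/-- Truncated Riemann–Liouville kernel. -/
noncomputable def rlK (δ : ℝ) (x : ℝ) : ℝ :=
  if 0 < x then x ^ (δ - 1) / Real.Gamma δ else 0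

lemma rlK_nonneg {δ : ℝ} (hδ : 0 < δ) (x : ℝ) : 0 ≤ rlK δ x := by
  unfold rlK
  split
  · exact div_nonneg (Real.rpow_nonneg (le_of_lt ‹_›) _) (Real.Gamma_pos_of_pos hδ).le
  · exact le_refl 0

lemma rlK_measurable (δ : ℝ) : Measurable (rlK δ) := by
  unfold rlK
  exact Measurable.ite measurableSet_Ioi
    ((measurable_id.pow_const _).div_const _) measurable_const

lemma rlK_of_pos {δ x : ℝ} (hx : 0 < x) : rlK δ x = x ^ (δ - 1) / Real.Gamma δ := if_pos hx

lemma rlK_of_nonpos {δ x : ℝ} (hx : x ≤ 0) : rlK δ x = 0 := if_neg (not_lt.2 hx)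

/-- real scaled beta integral -/
lemma real_beta_scaled {p q c : ℝ} (hp : 0 < p) (hq : 0 < q) (hc : 0 < c) :
    ∫ x in (0:ℝ)..c, x ^ (p - 1) * (c - x) ^ (q - 1) =
      c ^ (p + q - 1) * (Real.Gamma p * Real.Gamma q / Real.Gamma (p + q)) := by
  have hB := Complex.betaIntegral_scaled (p : ℂ) (q : ℂ) hc
  have hG := Complex.Gamma_mul_Gamma_eq_betaIntegral
    (s := (p:ℂ)) (t := (q:ℂ)) (by simpa using hp) (by simpa using hq)
  have hGpq : Complex.Gamma ((p:ℂ) + q) ≠ 0 := by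
    rw [← Complex.ofReal_add, Complex.Gamma_ofReal]
    exact_mod_cast (Real.Gamma_pos_of_pos (by positivity)).ne'
  have hBval : Complex.betaIntegral p q =
      ((Real.Gamma p * Real.Gamma q / Real.Gamma (p + q) : ℝ) : ℂ) := by
    have h1 : Complex.betaIntegral p q =
        Complex.Gamma p * Complex.Gamma q / Complex.Gamma ((p:ℂ) + q) := by
      rw [eq_div_iff hGpq, mul_comm, ← hG]
    rw [h1, ← Complex.ofReal_add, Complex.Gamma_ofReal, Complex.Gamma_ofReal,
      Complex.Gamma_ofReal]
    push_cast
    ring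
  have key : ∫ x in (0:ℝ)..c, (x:ℂ) ^ ((p:ℂ) - 1) * ((c:ℂ) - x) ^ ((q:ℂ) - 1) =
      ((c ^ (p + q - 1) * (Real.Gamma p * Real.Gamma q / Real.Gamma (p + q)) : ℝ) : ℂ) := by
    rw [hB, hBval]
    push_cast
    rw [Complex.ofReal_cpow hc.le]
    push_cast
    ring
  have heq : ∫ x in (0:ℝ)..c, (x:ℂ) ^ ((p:ℂ) - 1) * ((c:ℂ) - x) ^ ((q:ℂ) - 1) =
      ((∫ x in (0:ℝ)..c, x ^ (p - 1) * (c - x) ^ (q - 1) : ℝ) : ℂ) := by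
    rw [← intervalIntegral.integral_ofReal]
    apply intervalIntegral.integral_congr
    intro x hx
    rw [Set.uIcc_of_le hc.le] at hx
    push_cast
    rw [Complex.ofReal_cpow hx.1, Complex.ofReal_cpow (by linarith [hx.2])]
    push_cast
    ring
  rw [heq] at key
  exact_mod_cast key

lemma rlK_integrableOn_Ioo {δ : ℝ} (hδ : 0 < δ) (a : ℝ) :
    IntegrableOn (rlK δ) (Ioo 0 a) := by
  rcases le_or_gt a 0 with ha | ha
  · rw [Set.Ioo_eq_empty (by intro h; exact absurd (h.trans_le ha) (lt_irrefl 0))]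
    exact integrableOn_empty
  · have h1 : IntervalIntegrable (fun x : ℝ => x ^ (δ - 1)) volume 0 a :=
      intervalIntegral.intervalIntegrable_rpow' (by linarith)
    have h2 : IntegrableOn (fun x : ℝ => x ^ (δ - 1) / Real.Gamma δ) (Ioo 0 a) := by
      have := (h1.div_const (Real.Gamma δ)).1
      rw [intervalIntegrable_iff_integrableOn_Ioo_of_le ha.le] at h1
      exact (h1.div_const _)
    exact h2.congr_fun (fun x hx => (rlK_of_pos hx.1).symm) measurableSet_Ioo

lemma rlK_integral_Ioo {δ : ℝ} (hδ : 0 < δ) {a : ℝ} (ha : 0 ≤ a) :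
    ∫ x in Ioo (0:ℝ) a, rlK δ x = a ^ δ / (δ * Real.Gamma δ) := by
  have h1 : ∫ x in Ioo (0:ℝ) a, rlK δ x
      = ∫ x in Ioo (0:ℝ) a, x ^ (δ - 1) / Real.Gamma δ :=
    setIntegral_congr_fun measurableSet_Ioo (fun x hx => rlK_of_pos hx.1)
  rw [h1, ← integral_Ioc_eq_integral_Ioo, ← intervalIntegral.integral_of_le ha]
  rw [intervalIntegral.integral_div, integral_rpow (Or.inl (by linarith))]
  rw [Real.zero_rpow (by linarith : δ - 1 + 1 ≠ 0)]
  have : δ - 1 + 1 = δ := by ring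
  rw [this, sub_zero, div_div]

lemma rlK_comp_integrableOn {δ : ℝ} (hδ : 0 < δ) {s t : ℝ} (hst : s ≤ t) :
    IntegrableOn (fun r => rlK δ (s - r)) (Ioo 0 t) := by
  rcases le_or_gt s 0 with hs | hs
  · have : EqOn (fun r => rlK δ (s - r)) 0 (Ioo 0 t) := fun r hr =>
      rlK_of_nonpos (by linarith [hr.1])
    exact (integrableOn_zero).congr_fun this.symm measurableSet_Ioo
  · have hsplit : Ioo (0:ℝ) t = Ioo 0 s ∪ Ico s t := by
      rw [Set.Ioo_union_Ico_eq_Ioo hs hst]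
    rw [hsplit]
    apply IntegrableOn.union
    · -- on Ioo 0 s : (s - r) ^ (δ-1) / Γ δ
      have h1 : IntervalIntegrable (fun x : ℝ => x ^ (δ - 1)) volume 0 s :=
        intervalIntegral.intervalIntegrable_rpow' (by linarith)
      have h2 := ((h1.comp_sub_left s).div_const (Real.Gamma δ)).symm
      rw [sub_self, sub_zero, intervalIntegrable_iff_integrableOn_Ioo_of_le hs.le] at h2
      exact h2.congr_fun (fun r hr => (rlK_of_pos (by linarith [hr.2])).symm) measurableSet_Ioo
    · have : EqOn (fun r => rlK δ (s - r)) 0 (Ico s t) := fun r hr =>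
        rlK_of_nonpos (by linarith [hr.1])
      exact (integrableOn_zero).congr_fun this.symm measurableSet_Ico

lemma rlK_comp_integral {δ : ℝ} (hδ : 0 < δ) {s t : ℝ} (hs : 0 < s) (hst : s ≤ t) :
    ∫ r in Ioo (0:ℝ) t, rlK δ (s - r) = s ^ δ / (δ * Real.Gamma δ) := by
  have hred : ∫ r in Ioo (0:ℝ) t, rlK δ (s - r) = ∫ r in Ioo (0:ℝ) s, rlK δ (s - r) :=
    setIntegral_eq_of_subset_of_forall_diff_eq_zero measurableSet_Ioo
      (Set.Ioo_subset_Ioo le_rfl hst)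
      (fun r hr => by
        rcases hr with ⟨hr1, hr2⟩
        have : s ≤ r := by
          by_contra h
          exact hr2 ⟨hr1.1, not_le.1 h⟩
        exact rlK_of_nonpos (by linarith))
  rw [hred, ← integral_Ioc_eq_integral_Ioo, ← intervalIntegral.integral_of_le hs.le,
    intervalIntegral.integral_comp_sub_left (fun x => rlK δ x) s, sub_self, sub_zero,
    intervalIntegral.integral_of_le hs.le, integral_Ioc_eq_integral_Ioo]
  exact rlK_integral_Ioo hδ hs.le

lemma rlK_conv_integral {β γ : ℝ} (hβ : 0 < β) (hγ : 0 < γ) (hβγ : β + γ = 1)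
    {r t : ℝ} (hr : 0 < r) (hrt : r < t) :
    ∫ s in Ioo (0:ℝ) t, rlK γ (t - s) * rlK β (s - r) = 1 := by
  have hred : ∫ s in Ioo (0:ℝ) t, rlK γ (t - s) * rlK β (s - r)
      = ∫ s in Ioo r t, rlK γ (t - s) * rlK β (s - r) :=
    setIntegral_eq_of_subset_of_forall_diff_eq_zero measurableSet_Ioo
      (Set.Ioo_subset_Ioo hr.le le_rfl)
      (fun s hs => by
        rcases hs with ⟨hs1, hs2⟩
        have : s ≤ r := by
          by_contra h
          exact hs2 ⟨not_le.1 h, hs1.2⟩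
        have h0 : rlK β (s - r) = 0 := rlK_of_nonpos (by linarith)
        rw [h0, mul_zero])
  have hcong : ∫ s in Ioo r t, rlK γ (t - s) * rlK β (s - r)
      = ∫ s in Ioo r t, ((t - s) ^ (γ - 1) * (s - r) ^ (β - 1)) / (Real.Gamma γ * Real.Gamma β) := by
    apply setIntegral_congr_fun measurableSet_Ioo
    intro s hs
    obtain ⟨hs1, hs2⟩ := hs
    have e1 : rlK γ (t - s) = (t - s) ^ (γ - 1) / Real.Gamma γ := rlK_of_pos (by linarith)
    have e2 : rlK β (s - r) = (s - r) ^ (β - 1) / Real.Gamma β := rlK_of_pos (by linarith)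
    simp only [e1, e2]
    rw [div_mul_div_comm]
  have hsub : ∫ s in Ioo r t, (t - s) ^ (γ - 1) * (s - r) ^ (β - 1)
      = Real.Gamma β * Real.Gamma γ := by
    rw [← integral_Ioc_eq_integral_Ioo, ← intervalIntegral.integral_of_le hrt.le]
    have h1 : ∀ s : ℝ, (t - s) ^ (γ - 1) * (s - r) ^ (β - 1)
        = (fun x => x ^ (β - 1) * ((t - r) - x) ^ (γ - 1)) (s - r) := by
      intro s
      simp only
      rw [mul_comm]
      congr 2
      ring
    rw [intervalIntegral.integral_congr (fun s _ => h1 s),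
      intervalIntegral.integral_comp_sub_right (fun x => x ^ (β - 1) * ((t - r) - x) ^ (γ - 1)) r,
      sub_self]
    rw [real_beta_scaled hβ hγ (by linarith)]
    rw [hβγ, sub_self, Real.rpow_zero, Real.Gamma_one, one_mul, div_one]
  rw [hred, hcong, integral_div, hsub]
  rw [div_eq_one_iff_eq (by positivity)]
  ring

lemma rpow_two' (x : ℝ) : x ^ (2:ℝ) = x ^ 2 := by
  rw [show (2:ℝ) = ((2:ℕ):ℝ) by norm_num, Real.rpow_natCast]

/-- For every `α ∈ (0,1)` there is a constant `C > 0` (depending only on `α`) such that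
for every real Hilbert space `H`, every `T > 0`, every continuously differentiable
`v : [0,T] → H` (with derivative `v'`), and every `t ∈ (0,T]`,
`‖v(t) − v(0)‖² ≤ C t^α ∫_0^t ‖(I^{(1−α)/2} v′)(s)‖² ds`. -/
theorem sq_norm_sub_le_fracInt (α : ℝ) (hα0 : 0 < α) (hα1 : α < 1) :
    ∃ C : ℝ, 0 < C ∧
      ∀ (H : Type) [NormedAddCommGroup H] [InnerProductSpace ℝ H] [CompleteSpace H],
        ∀ T : ℝ, 0 < T →
          ∀ v v' : ℝ → H, (∀ s ∈ Set.Icc (0 : ℝ) T, HasDerivAt v (v' s) s) →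
            ContinuousOn v' (Set.Icc 0 T) →
            ∀ t ∈ Set.Ioc (0 : ℝ) T,
              ‖v t - v 0‖ ^ 2 ≤
                C * t ^ α *
                  ∫ s in Set.Ioc (0 : ℝ) t, ‖fracIntH H ((1 - α) / 2) v' s‖ ^ 2 := by
  have hγ : 0 < (1 + α) / 2 := by linarith
  have hΓγ : 0 < Real.Gamma ((1 + α) / 2) := Real.Gamma_pos_of_pos hγ
  refine ⟨(α * Real.Gamma ((1 + α) / 2) ^ 2)⁻¹, by positivity, ?_⟩
  intro H _ _ _ T hT v v' hv hv' t ht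
  obtain ⟨ht0, htT⟩ := ht
  set β := (1 - α) / 2 with hβdef
  set γ := (1 + α) / 2 with hγdef
  have hβ : 0 < β := by rw [hβdef]; linarith
  have hβγ : β + γ = 1 := by rw [hβdef, hγdef]; ring
  have hΓβ : 0 < Real.Gamma β := Real.Gamma_pos_of_pos hβ
  set μ := volume.restrict (Ioo (0:ℝ) t) with hμdef
  haveI : IsFiniteMeasure μ := ⟨by
    rw [hμdef, Measure.restrict_apply_univ]; exact measure_Ioo_lt_top⟩
  -- bound on v'
  obtain ⟨M, hM⟩ : ∃ M, ∀ x ∈ Icc (0:ℝ) T, ‖v' x‖ ≤ M := by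
    obtain ⟨M, hM⟩ := isCompact_Icc.exists_bound_of_continuousOn hv'
    exact ⟨M, hM⟩
  have hM0 : 0 ≤ M := le_trans (norm_nonneg _) (hM 0 ⟨le_rfl, hT.le⟩)
  have hsubT : Ioo (0:ℝ) t ⊆ Icc (0:ℝ) T := fun x hx => ⟨hx.1.le, hx.2.le.trans htT⟩
  have hv'm : AEStronglyMeasurable v' μ :=
    (hv'.mono hsubT).aestronglyMeasurable measurableSet_Ioo
  set w := fun s => fracIntH H β v' s with hwdef
  -- Step A : rewrite of fracIntH over the fixed set Ioo 0 t
  have hw : ∀ s ∈ Ioo (0:ℝ) t, w s = ∫ r in Ioo (0:ℝ) t, rlK β (s - r) • v' r := by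
    intro s hs
    rw [hwdef]
    simp only [fracIntH]
    rw [setIntegral_eq_of_subset_of_forall_diff_eq_zero measurableSet_Ioo
      (Set.Ioo_subset_Ioo le_rfl hs.2.le)
      (fun r hr => by
        rcases hr with ⟨hr1, hr2⟩
        have hle : s ≤ r := by
          by_contra hcon
          exact hr2 ⟨hr1.1, not_le.1 hcon⟩
        have h0 : rlK β (s - r) = 0 := rlK_of_nonpos (by linarith)
        rw [h0, zero_smul])]
    apply setIntegral_congr_fun measurableSet_Ioo
    intro r hr
    simp only
    rw [rlK_of_pos (by linarith [hr.2] : (0:ℝ) < s - r)]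
  -- Step B : integrability and norm bound for the inner integrand
  have hBint : ∀ s ∈ Ioo (0:ℝ) t, Integrable (fun r => rlK β (s - r) • v' r) μ := by
    intro s hs
    apply Integrable.mono' ((rlK_comp_integrableOn hβ hs.2.le).const_mul M)
    · exact (((rlK_measurable β).comp
        (measurable_const.sub measurable_id)).aestronglyMeasurable).smul hv'm
    · filter_upwards [ae_restrict_mem measurableSet_Ioo] with r hr
      rw [norm_smul, Real.norm_eq_abs, abs_of_nonneg (rlK_nonneg hβ _), mul_comm]
      exact mul_le_mul_of_nonneg_right (hM r (hsubT hr)) (rlK_nonneg hβ _)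
  have hBnorm : ∀ s ∈ Ioo (0:ℝ) t,
      ∫ r, rlK β (s - r) * ‖v' r‖ ∂μ ≤ M * (t ^ β / (β * Real.Gamma β)) := by
    intro s hs
    have h1 : ∫ r, rlK β (s - r) * ‖v' r‖ ∂μ ≤ ∫ r, M * rlK β (s - r) ∂μ := by
      apply setIntegral_mono_on
      · exact ((hBint s hs).norm.congr (by
          filter_upwards [ae_restrict_mem measurableSet_Ioo] with r hr
          rw [norm_smul, Real.norm_eq_abs, abs_of_nonneg (rlK_nonneg hβ _)]))
      · exact (rlK_comp_integrableOn hβ hs.2.le).const_mul M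
      · exact measurableSet_Ioo
      · intro r hr
        rw [mul_comm M]
        exact mul_le_mul_of_nonneg_left (hM r (hsubT hr)) (rlK_nonneg hβ _)
    rw [integral_const_mul] at h1
    calc ∫ r, rlK β (s - r) * ‖v' r‖ ∂μ ≤ M * ∫ r, rlK β (s - r) ∂μ := h1
    _ = M * (s ^ β / (β * Real.Gamma β)) := by
        rw [hμdef, rlK_comp_integral hβ hs.1 hs.2.le]
    _ ≤ M * (t ^ β / (β * Real.Gamma β)) := by
        apply mul_le_mul_of_nonneg_left _ hM0
        apply div_le_div_of_nonneg_right ?_ (by positivity)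
        exact Real.rpow_le_rpow hs.1.le hs.2.le hβ.le
  -- Step C : joint measurability
  set F : ℝ × ℝ → H := fun p => (rlK γ (t - p.1) * rlK β (p.1 - p.2)) • v' p.2 with hFdef
  have hprodeq : μ.prod μ = (volume.prod volume).restrict (Ioo (0:ℝ) t ×ˢ Ioo (0:ℝ) t) := by
    rw [hμdef, Measure.prod_restrict]
  have hv2m : AEStronglyMeasurable (fun p : ℝ × ℝ => v' p.2) (μ.prod μ) := by
    rw [hprodeq]
    apply ContinuousOn.aestronglyMeasurable _ (measurableSet_Ioo.prod measurableSet_Ioo)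
    exact hv'.comp continuous_snd.continuousOn (fun p hp => hsubT hp.2)
  have hFm : AEStronglyMeasurable F (μ.prod μ) := by
    apply AEStronglyMeasurable.smul _ hv2m
    exact (((rlK_measurable γ).comp (measurable_const.sub measurable_fst)).mul
      ((rlK_measurable β).comp (measurable_fst.sub measurable_snd))).aestronglyMeasurable
  -- Step D : product integrability
  have hkγint : IntegrableOn (fun s => rlK γ (t - s)) (Ioo (0:ℝ) t) :=
    rlK_comp_integrableOn hγ le_rfl
  have hFint : Integrable F (μ.prod μ) := by
    rw [integrable_prod_iff hFm]
    constructor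
    · filter_upwards [ae_restrict_mem measurableSet_Ioo] with s hs
      have : (fun r => F (s, r)) = fun r => rlK γ (t - s) • (rlK β (s - r) • v' r) := by
        funext r
        rw [hFdef]
        simp only [mul_smul]
      rw [this]
      exact (hBint s hs).smul (rlK γ (t - s))
    · apply Integrable.mono' ((hkγint.mul_const (M * (t ^ β / (β * Real.Gamma β)))))
      · exact hFm.norm.integral_prod_right'
      · filter_upwards [ae_restrict_mem measurableSet_Ioo] with s hs
        have h1 : ∫ r, ‖F (s, r)‖ ∂μ = rlK γ (t - s) * ∫ r, rlK β (s - r) * ‖v' r‖ ∂μ := by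
          rw [← integral_const_mul]
          apply integral_congr_ae
          filter_upwards with r
          rw [hFdef]
          simp only [norm_smul, Real.norm_eq_abs]
          rw [abs_of_nonneg (mul_nonneg (rlK_nonneg hγ _) (rlK_nonneg hβ _))]
          ring
        rw [Real.norm_eq_abs, h1, abs_of_nonneg (mul_nonneg (rlK_nonneg hγ _)
          (integral_nonneg (fun r => mul_nonneg (rlK_nonneg hβ _) (norm_nonneg _))))]
        exact mul_le_mul_of_nonneg_left (hBnorm s hs) (rlK_nonneg hγ _)
  -- Step E : the key identity
  have hId : v t - v 0 = ∫ s, rlK γ (t - s) • w s ∂μ := by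
    have e1 : ∫ s, rlK γ (t - s) • w s ∂μ = ∫ s, (∫ r, F (s, r) ∂μ) ∂μ := by
      apply integral_congr_ae
      filter_upwards [ae_restrict_mem measurableSet_Ioo] with s hs
      rw [hw s hs, ← integral_smul]
      apply integral_congr_ae
      filter_upwards with r
      rw [hFdef]
      simp only [smul_smul]
    have e2 : ∫ s, (∫ r, F (s, r) ∂μ) ∂μ = ∫ r, (∫ s, F (s, r) ∂μ) ∂μ :=
      integral_integral_swap (f := fun s r => F (s, r)) hFint
    have e3 : ∫ r, (∫ s, F (s, r) ∂μ) ∂μ = ∫ r, v' r ∂μ := by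
      apply integral_congr_ae
      filter_upwards [ae_restrict_mem measurableSet_Ioo] with r hr
      have h4 : ∫ s, F (s, r) ∂μ = (∫ s, rlK γ (t - s) * rlK β (s - r) ∂μ) • v' r := by
        rw [← integral_smul_const]
      rw [h4, hμdef, rlK_conv_integral hβ hγ hβγ hr.1 hr.2, one_smul]
    have e4 : ∫ r, v' r ∂μ = v t - v 0 := by
      rw [hμdef, ← integral_Ioc_eq_integral_Ioo, ← intervalIntegral.integral_of_le ht0.le]
      exact intervalIntegral.integral_eq_sub_of_hasDerivAt
        (fun x hx => hv x (by
          rw [uIcc_of_le ht0.le] at hx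
          exact ⟨hx.1, hx.2.trans htT⟩))
        ((hv'.mono (by
          rw [uIcc_of_le ht0.le]
          exact Icc_subset_Icc le_rfl htT)).intervalIntegrable)
    exact (((e1.trans e2).trans e3).trans e4).symm
  -- Step F : Hoelder
  have hwm : AEStronglyMeasurable w μ := by
    have hGm : AEStronglyMeasurable (fun p : ℝ × ℝ => rlK β (p.1 - p.2) • v' p.2) (μ.prod μ) :=
      (((rlK_measurable β).comp
        (measurable_fst.sub measurable_snd)).aestronglyMeasurable).smul hv2m
    apply hGm.integral_prod_right'.congr
    filter_upwards [ae_restrict_mem measurableSet_Ioo] with s hs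
    rw [hw s hs, hμdef]
  have hwB : ∀ᵐ s ∂μ, ‖w s‖ ≤ M * (t ^ β / (β * Real.Gamma β)) := by
    filter_upwards [ae_restrict_mem measurableSet_Ioo] with s hs
    rw [hw s hs]
    calc ‖∫ r in Ioo (0:ℝ) t, rlK β (s - r) • v' r‖
        ≤ ∫ r, ‖rlK β (s - r) • v' r‖ ∂μ := by
          rw [hμdef]
          exact norm_integral_le_integral_norm _
      _ = ∫ r, rlK β (s - r) * ‖v' r‖ ∂μ := by
          apply integral_congr_ae
          filter_upwards with r
          rw [norm_smul, Real.norm_eq_abs, abs_of_nonneg (rlK_nonneg hβ _)]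
      _ ≤ M * (t ^ β / (β * Real.Gamma β)) := hBnorm s hs
  have hofReal2 : ENNReal.ofReal (2:ℝ) = 2 := by norm_num
  have hMw : MemLp (fun s => ‖w s‖) (ENNReal.ofReal 2) μ := by
    rw [hofReal2]
    apply MemLp.of_bound hwm.norm (M * (t ^ β / (β * Real.Gamma β)))
    filter_upwards [hwB] with s h
    rw [Real.norm_eq_abs, abs_of_nonneg (norm_nonneg _)]
    exact h
  have hsqK : ∀ x : ℝ, rlK γ x ^ 2 = (Real.Gamma α / Real.Gamma γ ^ 2) * rlK α x := by
    intro x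
    by_cases hx : 0 < x
    · rw [rlK_of_pos hx, rlK_of_pos hx, div_pow, sq, ← Real.rpow_add hx]
      have hexp : γ - 1 + (γ - 1) = α - 1 := by rw [hγdef]; ring
      rw [hexp]
      have hΓα : Real.Gamma α ≠ 0 := (Real.Gamma_pos_of_pos hα0).ne'
      field_simp
    · rw [rlK_of_nonpos (not_lt.1 hx), rlK_of_nonpos (not_lt.1 hx)]
      ring
  have hsqint : Integrable (fun s => rlK γ (t - s) ^ 2) μ := by
    have : (fun s => rlK γ (t - s) ^ 2)
        = fun s => (Real.Gamma α / Real.Gamma γ ^ 2) * rlK α (t - s) :=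
      funext fun s => hsqK _
    rw [this]
    exact (rlK_comp_integrableOn hα0 le_rfl).const_mul _
  have hMk : MemLp (fun s => rlK γ (t - s)) (ENNReal.ofReal 2) μ := by
    rw [hofReal2]
    have haesm : AEStronglyMeasurable (fun s : ℝ => rlK γ (t - s)) μ :=
      ((rlK_measurable γ).comp (measurable_const.sub measurable_id)).aestronglyMeasurable
    exact (memLp_two_iff_integrable_sq haesm).2 hsqint
  have h22 : Real.HolderConjugate 2 2 := ⟨by norm_num, by norm_num, by norm_num⟩
  have hHold := integral_mul_le_Lp_mul_Lq_of_nonneg h22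
    (f := fun s => rlK γ (t - s)) (g := fun s => ‖w s‖) (μ := μ)
    (Filter.Eventually.of_forall fun s => rlK_nonneg hγ _)
    (Filter.Eventually.of_forall fun s => norm_nonneg _) hMk hMw
  have hA : ∫ s, rlK γ (t - s) ^ (2:ℝ) ∂μ = t ^ α * (α * Real.Gamma γ ^ 2)⁻¹ := by
    have e : ∫ s, rlK γ (t - s) ^ (2:ℝ) ∂μ
        = ∫ s, (Real.Gamma α / Real.Gamma γ ^ 2) * rlK α (t - s) ∂μ := by
      apply integral_congr_ae
      filter_upwards with s
      rw [rpow_two', hsqK]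
    rw [e, integral_const_mul, hμdef, rlK_comp_integral hα0 ht0 le_rfl]
    have hΓα : Real.Gamma α ≠ 0 := (Real.Gamma_pos_of_pos hα0).ne'
    field_simp
  have hA0 : (0:ℝ) ≤ ∫ s, rlK γ (t - s) ^ (2:ℝ) ∂μ :=
    integral_nonneg fun s => Real.rpow_nonneg (rlK_nonneg hγ _) _
  have hB0 : (0:ℝ) ≤ ∫ s, ‖w s‖ ^ (2:ℝ) ∂μ :=
    integral_nonneg fun s => Real.rpow_nonneg (norm_nonneg _) _
  have hnorm_le : ‖v t - v 0‖ ≤ (∫ s, rlK γ (t - s) ^ (2:ℝ) ∂μ) ^ ((1:ℝ)/2)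
      * (∫ s, ‖w s‖ ^ (2:ℝ) ∂μ) ^ ((1:ℝ)/2) := by
    rw [hId]
    calc ‖∫ s, rlK γ (t - s) • w s ∂μ‖ ≤ ∫ s, ‖rlK γ (t - s) • w s‖ ∂μ :=
        norm_integral_le_integral_norm _
      _ = ∫ s, rlK γ (t - s) * ‖w s‖ ∂μ := by
          apply integral_congr_ae
          filter_upwards with s
          rw [norm_smul, Real.norm_eq_abs, abs_of_nonneg (rlK_nonneg hγ _)]
      _ ≤ _ := hHold
  have hsq2 : ∀ X : ℝ, 0 ≤ X → (X ^ ((1:ℝ)/2)) ^ 2 = X := by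
    intro X hX
    rw [← Real.rpow_natCast (X ^ ((1:ℝ)/2)) 2, ← Real.rpow_mul hX]
    norm_num
  have key : ‖v t - v 0‖ ^ 2 ≤
      (∫ s, rlK γ (t - s) ^ (2:ℝ) ∂μ) * (∫ s, ‖w s‖ ^ (2:ℝ) ∂μ) := by
    calc ‖v t - v 0‖ ^ 2
        ≤ ((∫ s, rlK γ (t - s) ^ (2:ℝ) ∂μ) ^ ((1:ℝ)/2)
          * (∫ s, ‖w s‖ ^ (2:ℝ) ∂μ) ^ ((1:ℝ)/2)) ^ 2 :=
          pow_le_pow_left₀ (norm_nonneg _) hnorm_le 2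
      _ = _ := by rw [mul_pow, hsq2 _ hA0, hsq2 _ hB0]
  have hgoal : ∫ s in Ioc (0:ℝ) t, ‖fracIntH H β v' s‖ ^ 2 = ∫ s, ‖w s‖ ^ (2:ℝ) ∂μ := by
    rw [integral_Ioc_eq_integral_Ioo]
    apply integral_congr_ae
    filter_upwards with s
    rw [rpow_two']
  rw [hgoal]
  calc ‖v t - v 0‖ ^ 2
      ≤ (∫ s, rlK γ (t - s) ^ (2:ℝ) ∂μ) * (∫ s, ‖w s‖ ^ (2:ℝ) ∂μ) := key
    _ = (α * Real.Gamma γ ^ 2)⁻¹ * t ^ α * ∫ s, ‖w s‖ ^ (2:ℝ) ∂μ := by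
        rw [hA]; ring
end
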